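/- arXiv:2209.04706 — 2 statements merged into one kernel-verified Lean document; each statement's English description precedes it below -/
import Mathlib

section
/- The free group F_n of rank n is bi-orderable. -/
namespace MagnusOrder

noncomputable section
open scoped Classical

variable {σ : Type*}

/-- Noncommutative power series over ℤ with variables indexed by `σ`,
as coefficient functions on words. -/
def R (σ : Type*) : Type _ := List σ → ℤ

instance : AddCommGroup (R σ) := Pi.addCommGroup

instance : One (R σ) := ⟨fun w => if w = [] then 1 else 0⟩

instance : Mul (R σ) :=
  ⟨fun f g w => ∑ k ∈ Finset.range (w.length + 1), f (w.take k) * g (w.drop k)⟩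

theorem mul_coeff (f g : R σ) (w : List σ) :
    (f * g) w = ∑ k ∈ Finset.range (w.length + 1), f (w.take k) * g (w.drop k) := rfl

theorem one_coeff (w : List σ) : (1 : R σ) w = if w = [] then 1 else 0 := rfl

theorem add_coeff (f g : R σ) (w : List σ) : (f + g) w = f w + g w := rfl
theorem neg_coeff (f : R σ) (w : List σ) : (-f) w = -(f w) := rfl
theorem sub_coeff (f g : R σ) (w : List σ) : (f - g) w = f w - g w := rfl
theorem zero_coeff (w : List σ) : (0 : R σ) w = 0 := rfl

theorem one_mul' (f : R σ) : 1 * f = f := by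
  funext w
  rw [mul_coeff, Finset.sum_eq_single 0]
  · simp [one_coeff]
  · intro k hk hk0
    rw [one_coeff, if_neg, zero_mul]
    intro h
    rcases List.take_eq_nil_iff.mp h with h | h
    · exact hk0 h
    · subst h; simp at hk; omega
  · intro h; simp at h

theorem mul_one' (f : R σ) : f * 1 = f := by
  funext w
  rw [mul_coeff, Finset.sum_eq_single w.length]
  · simp [one_coeff, List.take_length]
  · intro k hk hk0
    rw [one_coeff, if_neg, mul_zero]
    intro h
    rw [List.drop_eq_nil_iff] at h
    simp at hk; omega
  · intro h; simp at h

theorem mul_assoc' (f g h : R σ) : f * g * h = f * (g * h) := by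
  funext w
  set N := w.length with hN
  have key : ∀ j k : ℕ, j ≤ k → k ≤ N →
      (w.take k).take j = w.take j ∧ (w.take k).drop j = (w.drop j).take (k - j) := by
    intro j k hjk hkN
    constructor
    · rw [List.take_take, min_eq_left hjk]
    · rw [List.drop_take]
  calc (f * g * h) w
      = ∑ k ∈ Finset.range (N + 1), (∑ j ∈ Finset.range (k + 1),
          f (w.take j) * g ((w.drop j).take (k - j))) * h (w.drop k) := by
        rw [mul_coeff]
        apply Finset.sum_congr rfl
        intro k hk
        simp only [Finset.mem_range] at hk
        have hkN : k ≤ N := by omega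
        rw [mul_coeff]
        congr 1
        rw [List.length_take, min_eq_left (by omega : k ≤ w.length)]
        apply Finset.sum_congr rfl
        intro j hj
        simp only [Finset.mem_range] at hj
        rw [(key j k (by omega) hkN).1, (key j k (by omega) hkN).2]
    _ = ∑ k ∈ Finset.Ico 0 (N + 1), ∑ j ∈ Finset.Ico 0 (k + 1),
          f (w.take j) * ((g ((w.drop j).take (k - j))) * h (w.drop k)) := by
        simp only [Finset.range_eq_Ico, Finset.sum_mul, mul_assoc]
    _ = ∑ j ∈ Finset.Ico 0 (N + 1), ∑ k ∈ Finset.Ico j (N + 1),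
          f (w.take j) * ((g ((w.drop j).take (k - j))) * h (w.drop k)) := by
        rw [← Finset.sum_Ico_Ico_comm]
    _ = (f * (g * h)) w := by
        rw [mul_coeff]
        simp only [Finset.range_eq_Ico]
        apply Finset.sum_congr rfl
        intro j hj
        simp only [Finset.mem_Ico] at hj
        rw [mul_coeff, Finset.mul_sum, List.length_drop,
          Finset.sum_Ico_eq_sum_range, Finset.range_eq_Ico,
          show N + 1 - j = N - j + 1 by omega]
        rw [Finset.range_eq_Ico]
        apply Finset.sum_congr rfl
        intro m hm
        simp only [Finset.mem_Ico] at hm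
        rw [show j + m - j = m by omega, List.drop_drop]
    
theorem left_distrib' (f g h : R σ) : f * (g + h) = f * g + f * h := by
  funext w
  simp only [mul_coeff, add_coeff, mul_add, Finset.sum_add_distrib]

theorem right_distrib' (f g h : R σ) : (f + g) * h = f * h + g * h := by
  funext w
  simp only [mul_coeff, add_coeff, add_mul, Finset.sum_add_distrib]

theorem zero_mul' (f : R σ) : 0 * f = 0 := by
  funext w; simp [mul_coeff, zero_coeff]

theorem mul_zero' (f : R σ) : f * 0 = 0 := by
  funext w; simp [mul_coeff, zero_coeff]

instance : Ring (R σ) :=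
  { (inferInstance : AddCommGroup (R σ)) with
    mul := (· * ·)
    one := 1
    mul_assoc := mul_assoc'
    one_mul := one_mul'
    mul_one := mul_one'
    left_distrib := left_distrib'
    right_distrib := right_distrib'
    zero_mul := zero_mul'
    mul_zero := mul_zero' }


/-- The generator series `1 + Xᵢ`. -/
def gen (i : σ) : R σ := fun w => if w = [] then 1 else if w = [i] then 1 else 0

/-- The geometric series `1 - Xᵢ + Xᵢ² - ⋯`, inverse of `gen i`. -/
def geom (i : σ) : R σ := fun w => if ∀ a ∈ w, a = i then (-1) ^ w.length else 0

theorem gen_coeff_long (i : σ) (w : List σ) (h : 2 ≤ w.length) : gen i w = 0 := by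
  rcases w with _ | ⟨a, t⟩
  · simp at h
  · rcases t with _ | ⟨b, s⟩
    · simp at h
    · simp [gen]


theorem gen_nil (i : σ) : gen i [] = 1 := rfl

theorem gen_single (i a : σ) : gen i [a] = if a = i then 1 else 0 := by
  simp [gen]

theorem geom_allEq {i : σ} {w : List σ} (h : ∀ b ∈ w, b = i) :
    geom i w = (-1) ^ w.length := if_pos h

theorem geom_notAllEq {i : σ} {w : List σ} (h : ¬ ∀ b ∈ w, b = i) :
    geom i w = 0 := if_neg h

theorem gen_mul_geom (i : σ) : gen i * geom i = 1 := by
  funext w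
  rcases w with _ | ⟨a, t⟩
  · simp [mul_coeff, gen, geom, one_coeff]
  · rw [mul_coeff, one_coeff, if_neg (by simp)]
    simp only [List.length_cons]
    rw [Finset.sum_range_succ']
    have h1 : ∀ k ∈ Finset.range (t.length + 1), k ≠ 0 →
        gen i ((a :: t).take (k + 1)) * geom i ((a :: t).drop (k + 1)) = 0 := by
      intro k hk hk0
      simp only [Finset.mem_range] at hk
      have hne : t.take k ≠ [] := by
        intro h
        rcases List.take_eq_nil_iff.mp h with h | h
        · exact hk0 h
        · subst h; simp at hk; omega
      rw [List.take_succ_cons, gen_coeff_long, zero_mul]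
      rcases ht : t.take k with _ | ⟨x, s⟩
      · exact absurd ht hne
      · simp [ht]
    rw [Finset.sum_eq_single 0 h1 (by intro h; simp at h)]
    simp only [zero_add, List.take_succ_cons, List.take_zero, List.drop_succ_cons,
      List.drop_zero]
    rw [gen_single, gen_nil, one_mul]
    by_cases ha : a = i
    · subst ha
      rw [if_pos rfl, one_mul]
      by_cases ht : ∀ b ∈ t, b = a
      · have h2 : ∀ b ∈ a :: t, b = a := by
          intro b hb
          rcases List.mem_cons.mp hb with h | h
          · exact h
          · exact ht b h
        rw [geom_allEq ht, geom_allEq h2, List.length_cons, pow_succ]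
        ring
      · have h2 : ¬ ∀ b ∈ a :: t, b = a := by
          intro h; exact ht fun b hb => h b (List.mem_cons_of_mem _ hb)
        rw [geom_notAllEq ht, geom_notAllEq h2, add_zero]
    · have h2 : ¬ ∀ b ∈ a :: t, b = i := by
        intro h; exact ha (h a (List.mem_cons_self))
      rw [if_neg ha, zero_mul, geom_notAllEq h2, add_zero]

theorem geom_mul_gen (i : σ) : geom i * gen i = 1 := by
  funext w
  induction w using List.reverseRecOn with
  | nil => simp [mul_coeff, gen, geom, one_coeff]
  | append_singleton t a _ =>
    rw [mul_coeff, one_coeff, if_neg (by simp)]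
    simp only [List.length_append, List.length_singleton]
    rw [Finset.sum_range_succ, Finset.sum_range_succ]
    have h1 : ∀ k ∈ Finset.range t.length,
        geom i ((t ++ [a]).take k) * gen i ((t ++ [a]).drop k) = 0 := by
      intro k hk
      simp only [Finset.mem_range] at hk
      rw [gen_coeff_long, mul_zero]
      rw [List.length_drop]
      simp only [List.length_append, List.length_singleton]
      omega
    rw [Finset.sum_eq_zero h1, zero_add]
    have h2 : (t ++ [a]).take t.length = t := by
      rw [List.take_left']; rfl
    have h3 : (t ++ [a]).drop t.length = [a] := by
      rw [List.drop_left']; rfl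
    have h4 : (t ++ [a]).take (t.length + 1) = t ++ [a] := by
      rw [List.take_of_length_le]; simp
    have h5 : (t ++ [a]).drop (t.length + 1) = [] := by
      rw [List.drop_of_length_le]; simp
    rw [h2, h3, h4, h5, gen_single, gen_nil, mul_one]
    by_cases ha : a = i
    · subst ha
      rw [if_pos rfl, mul_one]
      by_cases ht : ∀ b ∈ t, b = a
      · have h6 : ∀ b ∈ t ++ [a], b = a := by
          intro b hb
          rcases List.mem_append.mp hb with h | h
          · exact ht b h
          · simpa using h
        rw [geom_allEq ht, geom_allEq h6, List.length_append, List.length_singleton,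
          pow_succ]
        ring
      · have h6 : ¬ ∀ b ∈ t ++ [a], b = a := by
          intro h; exact ht fun b hb => h b (List.mem_append_left _ hb)
        rw [geom_notAllEq ht, geom_notAllEq h6, add_zero]
    · have h6 : ¬ ∀ b ∈ t ++ [a], b = i := by
        intro h; exact ha (h a (by simp))
      rw [if_neg ha, mul_zero, geom_notAllEq h6, add_zero]

/-- The generator `1 + Xᵢ` as a unit of `R σ`. -/
def U (i : σ) : (R σ)ˣ := ⟨gen i, geom i, gen_mul_geom i, geom_mul_gen i⟩

theorem U_inv_coe (i : σ) : ((U i)⁻¹ : (R σ)ˣ).val = geom i := rfl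

/-- Constant coefficient, as a monoid hom. -/
def piC : R σ →* ℤ where
  toFun f := f []
  map_one' := rfl
  map_mul' f g := by
    show (f * g) [] = f [] * g []
    rw [mul_coeff]
    simp

theorem support_mul {f g : R σ} {w : List σ} (h : (f * g) w ≠ 0) :
    ∃ k, k ≤ w.length ∧ f (w.take k) ≠ 0 ∧ g (w.drop k) ≠ 0 := by
  rw [mul_coeff] at h
  obtain ⟨k, hk, hne⟩ := Finset.exists_ne_zero_of_sum_ne_zero h
  simp only [Finset.mem_range] at hk
  exact ⟨k, by omega, fun h0 => hne (by rw [h0, zero_mul]),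
    fun h0 => hne (by rw [h0, mul_zero])⟩

theorem support_zpow {i : σ} : ∀ (e : ℤ) (w : List σ),
    ((U i ^ e : (R σ)ˣ) : R σ) w ≠ 0 → ∀ a ∈ w, a = i := by
  have base : ∀ w : List σ, (1 : R σ) w ≠ 0 → ∀ a ∈ w, a = i := by
    intro w hw a ha
    rw [one_coeff] at hw
    rcases w with _ | _
    · simp at ha
    · simp at hw
  have genS : ∀ w : List σ, gen i w ≠ 0 → ∀ a ∈ w, a = i := by
    intro w hw a ha
    unfold gen at hw
    split_ifs at hw with h1 h2
    · subst h1; simp at ha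
    · subst h2; simpa using ha
    · exact absurd rfl hw
  have geomS : ∀ w : List σ, geom i w ≠ 0 → ∀ a ∈ w, a = i := by
    intro w hw a ha
    unfold geom at hw
    split_ifs at hw with h1
    · exact h1 a ha
    · exact absurd rfl hw
  have mulS : ∀ f g : R σ, (∀ w, f w ≠ 0 → ∀ a ∈ w, a = i) →
      (∀ w, g w ≠ 0 → ∀ a ∈ w, a = i) → ∀ w, (f * g) w ≠ 0 → ∀ a ∈ w, a = i := by
    intro f g hf hg w hw a ha
    obtain ⟨k, hk, h1, h2⟩ := support_mul hw
    rw [← List.take_append_drop k w] at ha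
    rcases List.mem_append.mp ha with h | h
    · exact hf _ h1 a h
    · exact hg _ h2 a h
  intro e
  induction e using Int.induction_on with
  | zero => simpa using base
  | succ e ih =>
    intro w hw
    rw [zpow_add_one, Units.val_mul] at hw
    exact mulS _ _ ih genS w hw
  | pred e ih =>
    intro w hw
    rw [zpow_sub_one, Units.val_mul, U_inv_coe] at hw
    exact mulS _ _ ih geomS w hw

theorem zpow_coeff_nil {i : σ} (e : ℤ) : ((U i ^ e : (R σ)ˣ) : R σ) [] = 1 := by
  have h1 : Units.map (piC : R σ →* ℤ) (U i) = 1 := by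
    ext
    show piC (gen i) = 1
    rfl
  have h2 : Units.map (piC : R σ →* ℤ) (U i ^ e) = 1 := by
    rw [map_zpow, h1, one_zpow]
  have h3 := congrArg Units.val h2
  rw [Units.coe_map] at h3
  simp only [Units.val_one] at h3
  exact h3

theorem zpow_coeff_single {i : σ} : ∀ e : ℤ, ((U i ^ e : (R σ)ˣ) : R σ) [i] = e := by
  have hgen1 : gen i [i] = 1 := by rw [gen_single, if_pos rfl]
  have hgeom1 : geom i [i] = -1 := by
    rw [geom_allEq (by simp)]; simp
  intro e
  induction e using Int.induction_on with
  | zero => rfl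
  | succ e ih =>
    rw [zpow_add_one, Units.val_mul, mul_coeff]
    show ∑ k ∈ Finset.range 2, _ = _
    rw [Finset.sum_range_succ, Finset.sum_range_succ, Finset.sum_range_zero]
    simp only [List.take_zero, List.drop_zero, List.take_succ_cons, List.take_nil,
      List.drop_succ_cons, List.drop_nil]
    show 0 + ((U i ^ (e : ℤ) : (R σ)ˣ) : R σ) [] * gen i [i] +
      ((U i ^ (e : ℤ) : (R σ)ˣ) : R σ) [i] * gen i [] = _
    rw [zpow_coeff_nil, ih, hgen1, gen_nil]
    push_cast
    ring
  | pred e ih =>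
    rw [zpow_sub_one, Units.val_mul, U_inv_coe, mul_coeff]
    show ∑ k ∈ Finset.range 2, _ = _
    rw [Finset.sum_range_succ, Finset.sum_range_succ, Finset.sum_range_zero]
    simp only [List.take_zero, List.drop_zero, List.take_succ_cons, List.take_nil,
      List.drop_succ_cons, List.drop_nil]
    show 0 + ((U i ^ (-e : ℤ) : (R σ)ˣ) : R σ) [] * geom i [i] +
      ((U i ^ (-e : ℤ) : (R σ)ˣ) : R σ) [i] * geom i [] = _
    rw [zpow_coeff_nil, ih, hgeom1]
    show _ + _ * 1 = _
    push_cast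
    ring

/-- `CP js w` : the word `w` is a concatenation of constant blocks with letters
given (in order) by `js`. -/
def CP : List σ → List σ → Prop
  | [], w => w = []
  | j :: js, w => ∃ (m : ℕ) (w' : List σ), w = List.replicate m j ++ w' ∧ CP js w'

/-- Product of the block word `B`: `∏ U_{jₜ}^{eₜ}`. -/
def prodB (B : List (σ × ℤ)) : (R σ)ˣ := (B.map fun p => U p.1 ^ p.2).prod

theorem prodB_nil : prodB ([] : List (σ × ℤ)) = 1 := rfl

theorem prodB_cons (p : σ × ℤ) (B : List (σ × ℤ)) :
    prodB (p :: B) = U p.1 ^ p.2 * prodB B := by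
  simp [prodB]

theorem suppB : ∀ (B : List (σ × ℤ)) (w : List σ),
    (prodB B : R σ) w ≠ 0 → CP (B.map Prod.fst) w := by
  intro B
  induction B with
  | nil =>
    intro w hw
    rw [prodB_nil] at hw
    show w = []
    by_contra hne
    rw [Units.val_one, one_coeff, if_neg hne] at hw
    exact hw rfl
  | cons p B ih =>
    intro w hw
    rw [prodB_cons, Units.val_mul] at hw
    obtain ⟨k, hk, h1, h2⟩ := support_mul hw
    refine ⟨(w.take k).length, w.drop k, ?_, ih _ h2⟩
    have hrep : w.take k = List.replicate (w.take k).length p.1 :=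
      List.eq_replicate_of_mem (support_zpow p.2 _ h1)
    rw [← hrep, List.take_append_drop]

theorem chain'_replicate_le_one {j : σ} {m : ℕ}
    (h : List.Chain' (· ≠ ·) (List.replicate m j)) : m ≤ 1 := by
  rcases m with _ | _ | m
  · omega
  · omega
  · exfalso
    rw [List.replicate_succ, List.replicate_succ] at h
    exact (List.isChain_cons_cons.mp h).1 rfl

theorem CP_length_le : ∀ (js w : List σ), CP js w → List.Chain' (· ≠ ·) w →
    w.length ≤ js.length := by
  intro js
  induction js with
  | nil =>
    intro w hcp _
    rw [show w = [] from hcp]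
  | cons j js ih =>
    rintro w ⟨m, w', rfl, hcp⟩ hch
    rw [List.length_append, List.length_replicate, List.length_cons]
    have h1 := (List.isChain_append.mp hch).1
    have h2 := (List.isChain_append.mp hch).2.1
    have := chain'_replicate_le_one h1
    have := ih w' hcp h2
    omega

theorem coeffB : ∀ (B : List (σ × ℤ)), (∀ p ∈ B, p.2 ≠ 0) →
    List.Chain' (· ≠ ·) (B.map Prod.fst) → (prodB B : R σ) (B.map Prod.fst) ≠ 0 := by
  intro B
  induction B with
  | nil =>
    intro _ _
    show (1 : R σ) [] ≠ 0
    rw [one_coeff, if_pos rfl]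
    exact one_ne_zero
  | cons p B ih =>
    intro hne hch
    obtain ⟨j, e⟩ := p
    have he : e ≠ 0 := hne (j, e) List.mem_cons_self
    have hne' : ∀ q ∈ B, q.2 ≠ 0 := fun q hq => hne q (List.mem_cons_of_mem _ hq)
    have hch' : List.Chain' (· ≠ ·) (B.map Prod.fst) := hch.tail
    have hch2 : List.Chain' (· ≠ ·) (j :: B.map Prod.fst) := hch
    have key : (((U j ^ e : (R σ)ˣ) : R σ) * (prodB B : R σ)) (j :: B.map Prod.fst) =
        e * (prodB B : R σ) (B.map Prod.fst) := by
      rw [mul_coeff]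
      rw [Finset.sum_eq_single 1]
      · simp only [List.take_succ_cons, List.take_zero, List.drop_succ_cons, List.drop_zero]
        rw [zpow_coeff_single]
      · intro k hk hk1
        simp only [Finset.mem_range, List.length_cons] at hk
        rcases Nat.eq_zero_or_pos k with rfl | hkpos
        · simp only [List.take_zero, List.drop_zero]
          rw [zpow_coeff_nil e, one_mul]
          by_contra h0
          have hcp := suppB B _ h0
          have hle := CP_length_le (B.map Prod.fst) (j :: B.map Prod.fst) hcp hch2
          simp at hle
        · have hk2 : 2 ≤ k := by omega
          rcases hjs : B.map Prod.fst with _ | ⟨b, t⟩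
          · rw [hjs] at hk
            simp at hk
            omega
          · rw [hjs] at hch2
            have hjb : j ≠ b := (List.isChain_cons_cons.mp hch2).1
            rw [show k = (k - 1) + 1 by omega, List.take_succ_cons]
            have hmem : b ∈ (b :: t).take (k - 1) := by
              rw [show k - 1 = (k - 2) + 1 by omega, List.take_succ_cons]
              exact List.mem_cons_self
            by_contra h0
            have hfac : ((U j ^ e : (R σ)ˣ) : R σ) (j :: (b :: t).take (k - 1)) ≠ 0 := by
              intro hh
              rw [hh, zero_mul] at h0
              exact h0 rfl
            have hbj := support_zpow e _ hfac b (List.mem_cons_of_mem _ hmem)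
            exact hjb hbj.symm
      · intro h1
        exfalso
        simp at h1
    have hgoal : (prodB ((j, e) :: B) : R σ) ((((j, e) :: B)).map Prod.fst) =
        e * (prodB B : R σ) (B.map Prod.fst) := by
      rw [prodB_cons, Units.val_mul]
      exact key
    rw [hgoal]
    exact mul_ne_zero he (ih hne' hch')

/-! ### From free group elements to block words -/

open FreeGroup in
/-- The Magnus morphism sending the generator `i` to `1 + Xᵢ`. -/
def mu (σ : Type*) : FreeGroup σ →* (R σ)ˣ := FreeGroup.lift (fun i => U i)

def nu (L : List (σ × Bool)) : (R σ)ˣ :=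
  (L.map fun x => U x.1 ^ (if x.2 then (1 : ℤ) else -1)).prod

theorem mu_toWord (g : FreeGroup σ) : mu σ g = nu g.toWord := by
  conv_lhs => rw [mu, ← FreeGroup.mk_toWord (x := g)]
  rw [FreeGroup.lift_mk, nu]
  congr 1
  apply List.map_congr_left
  intro x _
  cases hx : x.2 <;> simp [zpow_neg_one]

theorem mu_coeff_nil (g : FreeGroup σ) : (mu σ g : R σ) [] = 1 := by
  have h1 : (Units.map (piC : R σ →* ℤ)).comp (mu σ) = 1 := by
    apply FreeGroup.ext_hom
    intro a
    rw [MonoidHom.comp_apply, MonoidHom.one_apply]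
    have hOf : mu σ (FreeGroup.of a) = U a := FreeGroup.lift_apply_of
    rw [hOf]
    ext
    show piC (gen a) = 1
    rfl
  have h2 : Units.map (piC : R σ →* ℤ) (mu σ g) = 1 := by
    rw [← MonoidHom.comp_apply, h1]
    rfl
  have h3 := congrArg Units.val h2
  rw [Units.coe_map] at h3
  simp only [Units.val_one] at h3
  exact h3

/-- Reducedness of a word, in chain form. -/
def Red' (L : List (σ × Bool)) : Prop :=
  List.Chain' (fun a b => a.1 = b.1 → a.2 = b.2) L

theorem chain'_decomp {α : Type*} {Rr : α → α → Prop} :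
    ∀ {L : List α}, ¬ List.Chain' Rr L →
      ∃ p1 a b p2, L = p1 ++ a :: b :: p2 ∧ ¬ Rr a b := by
  intro L
  induction L with
  | nil => intro h; exact absurd List.isChain_nil h
  | cons x t ih =>
    intro h
    change ¬ List.IsChain Rr (x :: t) at h
    rw [List.isChain_cons] at h
    by_cases ht : List.Chain' Rr t
    · have h2 : ¬ ∀ y ∈ t.head?, Rr x y := fun hall => h ⟨hall, ht⟩
      push_neg at h2
      obtain ⟨y, hy, hxy⟩ := h2
      rcases t with _ | ⟨z, t'⟩
      · simp at hy
      · have hyz : z = y := by simpa using hy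
        subst hyz
        exact ⟨[], x, z, t', rfl, hxy⟩
    · obtain ⟨p1, a, b, p2, rfl, hab⟩ := ih ht
      exact ⟨x :: p1, a, b, p2, rfl, hab⟩

theorem red'_toWord (g : FreeGroup σ) : Red' g.toWord := by
  by_contra h
  obtain ⟨p1, a, b, p2, heq, hab⟩ := chain'_decomp h
  push_neg at hab
  obtain ⟨h1, h2⟩ := hab
  have hb : b = (a.1, !a.2) := by
    ext
    · exact h1.symm
    · simp only []
      cases ha2 : a.2 <;> cases hb2 : b.2 <;> simp_all
  exact FreeGroup.reduce.not (x := a.1) (b := a.2)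
    (by rw [FreeGroup.reduce_toWord, heq, hb])

/-- Group the letters of a word into blocks. -/
def blocks : List (σ × Bool) → List (σ × ℤ)
  | [] => []
  | (i, b) :: t =>
    match blocks t with
    | [] => [(i, if b then 1 else -1)]
    | (j, e) :: r =>
      if i = j then (j, e + (if b then 1 else -1)) :: r
      else (i, if b then 1 else -1) :: (j, e) :: r

theorem blocks_cons (i : σ) (b : Bool) (t : List (σ × Bool)) :
    blocks ((i, b) :: t) = match blocks t with
      | [] => [(i, if b then 1 else -1)]
      | (j, e) :: r =>
        if i = j then (j, e + (if b then 1 else -1)) :: r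
        else (i, if b then 1 else -1) :: (j, e) :: r := rfl

theorem nu_eq_prodB_blocks : ∀ L : List (σ × Bool), nu L = prodB (blocks L) := by
  intro L
  induction L with
  | nil => rfl
  | cons x t ih =>
    obtain ⟨i, b⟩ := x
    have hnu : nu ((i, b) :: t) = U i ^ (if b then (1 : ℤ) else -1) * nu t := by
      simp [nu]
    rw [hnu, ih, blocks_cons]
    rcases hbt : blocks t with _ | ⟨⟨j, e⟩, r⟩
    · dsimp only
      rw [prodB_nil, prodB_cons, prodB_nil]
    · dsimp only
      by_cases hij : i = j
      · subst hij
        rw [if_pos rfl, prodB_cons, prodB_cons]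
        show _ = (U i ^ (e + if b then (1:ℤ) else -1)) * _
        rw [zpow_add, ← mul_assoc]
        congr 1
        rw [zpow_mul_comm]
      · rw [if_neg hij, prodB_cons, prodB_cons, prodB_cons]

theorem blocks_good : ∀ (t : List (σ × Bool)) (i : σ) (b : Bool),
    Red' ((i, b) :: t) →
    ∃ (e : ℤ) (B : List (σ × ℤ)),
      blocks ((i, b) :: t) = (i, e) :: B ∧ (0 < e ↔ b = true) ∧
      (∀ p ∈ (i, e) :: B, p.2 ≠ 0) ∧
      List.Chain' (· ≠ ·) (((i, e) :: B).map Prod.fst) := by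
  intro t
  induction t with
  | nil =>
    intro i b _
    refine ⟨if b then 1 else -1, [], rfl, ?_, ?_, ?_⟩
    · cases b <;> simp
    · intro p hp
      simp only [List.mem_singleton] at hp
      subst hp
      cases b <;> simp
    · exact List.isChain_singleton _
  | cons x t ih =>
    obtain ⟨i', b'⟩ := x
    intro i b hred
    have hred' : Red' ((i', b') :: t) := hred.tail
    obtain ⟨e', B', heq', hsgn', hnz', hch'⟩ := ih i' b' hred'
    have hblk : blocks ((i, b) :: (i', b') :: t) =
        if i = i' then (i', e' + (if b then 1 else -1)) :: B'
        else (i, if b then 1 else -1) :: (i', e') :: B' := by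
      show (match blocks ((i', b') :: t) with
        | [] => [(i, if b then 1 else -1)]
        | (j, e) :: r =>
          if i = j then (j, e + (if b then 1 else -1)) :: r
          else (i, if b then 1 else -1) :: (j, e) :: r) = _
      rw [heq']
    by_cases hij : i = i'
    · subst hij
      have hbb : b = b' := (List.isChain_cons_cons.mp hred).1 rfl
      subst hbb
      have he'0 : e' ≠ 0 := hnz' _ List.mem_cons_self
      have hsgn2 : (0 < e' + (if b then (1:ℤ) else -1)) ↔ b = true := by
        cases b
        · have hneg : ¬ 0 < e' := by
            intro hc
            exact absurd (hsgn'.mp hc) (by simp)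
          rw [if_neg (by simp)]
          constructor
          · intro h; omega
          · intro h; exact absurd h (by simp)
        · have hpos : 0 < e' := hsgn'.mpr rfl
          rw [if_pos rfl]
          constructor
          · intro _; rfl
          · intro _; omega
      refine ⟨e' + (if b then 1 else -1), B', by rw [hblk, if_pos rfl], hsgn2, ?_, ?_⟩
      · intro p hp
        rcases List.mem_cons.mp hp with rfl | hp
        · show e' + (if b then (1:ℤ) else -1) ≠ 0
          cases b
          · have hneg : ¬ 0 < e' := by
              intro hc
              exact absurd (hsgn'.mp hc) (by simp)
            rw [if_neg (by simp)]
            omega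
          · have hpos : 0 < e' := hsgn'.mpr rfl
            rw [if_pos rfl]
            omega
        · exact hnz' p (List.mem_cons_of_mem _ hp)
      · exact hch'
    · refine ⟨if b then 1 else -1, (i', e') :: B', by rw [hblk, if_neg hij], ?_, ?_, ?_⟩
      · cases b <;> simp
      · intro p hp
        rcases List.mem_cons.mp hp with rfl | hp
        · cases b <;> simp
        · exact hnz' p hp
      · change List.IsChain _ _
        rw [List.map_cons, List.map_cons, List.isChain_cons_cons]
        exact ⟨hij, hch'⟩

theorem mu_ne_coeff {g : FreeGroup σ} (hg : g ≠ 1) :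
    ∃ w : List σ, w ≠ [] ∧ (mu σ g : R σ) w ≠ 0 := by
  have hL : g.toWord ≠ [] := fun h => hg (FreeGroup.toWord_eq_nil_iff.mp h)
  rcases hLs : g.toWord with _ | ⟨⟨i, b⟩, t⟩
  · exact absurd hLs hL
  · have hred : Red' ((i, b) :: t) := by rw [← hLs]; exact red'_toWord g
    obtain ⟨e, B, heq, _, hnz, hch⟩ := blocks_good t i b hred
    refine ⟨(((i, e) :: B)).map Prod.fst, by simp, ?_⟩
    rw [mu_toWord, hLs, nu_eq_prodB_blocks, heq]
    exact coeffB _ hnz hch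

/-! ### Leading coefficients -/

/-- An arbitrary well-order on words. -/
local notation "wo" => (WellOrderingRel : List σ → List σ → Prop)

/-- The minimal length of a word in the support. -/
def minLen (f : R σ) : ℕ := sInf {k | ∃ w : List σ, w.length = k ∧ f w ≠ 0}

def levelSet (f : R σ) : Set (List σ) := {w | w.length = minLen f ∧ f w ≠ 0}

theorem exists_coeff_ne_zero {f : R σ} (hf : f ≠ 0) : ∃ w, f w ≠ 0 := by
  by_contra h
  push_neg at h
  exact hf (funext fun w => h w)

theorem levelSet_nonempty {f : R σ} (hf : f ≠ 0) : (levelSet f).Nonempty := by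
  obtain ⟨w, hw⟩ := exists_coeff_ne_zero hf
  have hne : {k | ∃ w : List σ, w.length = k ∧ f w ≠ 0}.Nonempty :=
    ⟨w.length, w, rfl, hw⟩
  obtain ⟨v, hv1, hv2⟩ := Nat.sInf_mem hne
  exact ⟨v, hv1, hv2⟩

theorem coeff_eq_zero_of_length_lt {f : R σ} {w : List σ}
    (hw : w.length < minLen f) : f w = 0 := by
  by_contra h
  have hle : minLen f ≤ w.length :=
    Nat.sInf_le (show w.length ∈ {k | ∃ v : List σ, v.length = k ∧ f v ≠ 0}
      from ⟨w, rfl, h⟩)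
  omega

/-- The leading word: the well-order-minimal word of minimal length in the support. -/
def Dw (f : R σ) : List σ :=
  if h : (levelSet f).Nonempty then
    (IsWellFounded.wf (r := (WellOrderingRel : List σ → List σ → Prop))).min (levelSet f) h
  else []

/-- The leading coefficient. -/
def lead (f : R σ) : ℤ := f (Dw f)

theorem Dw_mem {f : R σ} (hf : f ≠ 0) : Dw f ∈ levelSet f := by
  rw [Dw, dif_pos (levelSet_nonempty hf)]
  exact WellFounded.min_mem _ _ _

theorem lead_ne_zero {f : R σ} (hf : f ≠ 0) : lead f ≠ 0 := (Dw_mem hf).2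

theorem Dw_length {f : R σ} (hf : f ≠ 0) : (Dw f).length = minLen f := (Dw_mem hf).1

theorem not_lt_Dw {f : R σ} (hf : f ≠ 0) {w : List σ} (hw : w ∈ levelSet f) :
    ¬ WellOrderingRel w (Dw f) := by
  rw [Dw, dif_pos (levelSet_nonempty hf)]
  exact WellFounded.not_lt_min _ _ hw

theorem levelSet_congr {f g : R σ} (h : levelSet f = levelSet g)
    (h2 : minLen f = minLen g) : Dw f = Dw g ∧ (∀ w ∈ levelSet f, f w = g w → True) := by
  constructor
  · rw [Dw, Dw, h]
  · intro _ _ _; trivial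

theorem minLen_eq_of {f : R σ} {k : ℕ} (hne : ∃ w : List σ, w.length = k ∧ f w ≠ 0)
    (hlow : ∀ w : List σ, w.length < k → f w = 0) : minLen f = k := by
  have h1 : minLen f ≤ k := Nat.sInf_le hne
  have h2 : k ≤ minLen f := by
    apply le_csInf ⟨k, hne⟩
    intro m hm
    obtain ⟨w, hw1, hw2⟩ := hm
    by_contra hc
    exact hw2 (hlow w (by omega))
  omega

/-- Perturbation by strictly longer terms does not change the leading data. -/
theorem perturb {f h : R σ} (hf : f ≠ 0)
    (hh : ∀ w : List σ, w.length ≤ minLen f → h w = 0) :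
    f + h ≠ 0 ∧ minLen (f + h) = minLen f ∧ Dw (f + h) = Dw f ∧ lead (f + h) = lead f := by
  have hagree : ∀ w : List σ, w.length ≤ minLen f → (f + h) w = f w := by
    intro w hw
    show f w + h w = f w
    rw [hh w hw, add_zero]
  have hDmem := Dw_mem hf
  have hDlen : (Dw f).length = minLen f := hDmem.1
  have hne : (f + h) (Dw f) ≠ 0 := by
    rw [hagree _ (le_of_eq hDlen)]
    exact hDmem.2
  have hfh : f + h ≠ 0 := by
    intro h0
    rw [h0] at hne
    exact hne rfl
  have hmin : minLen (f + h) = minLen f := by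
    apply minLen_eq_of ⟨Dw f, hDlen, hne⟩
    intro w hw
    show f w + h w = 0
    rw [coeff_eq_zero_of_length_lt hw, hh w (by omega), add_zero]
  have hset : levelSet (f + h) = levelSet f := by
    ext w
    constructor
    · rintro ⟨h1, h2⟩
      rw [hmin] at h1
      rw [hagree w (le_of_eq h1)] at h2
      exact ⟨h1, h2⟩
    · rintro ⟨h1, h2⟩
      refine ⟨by rw [hmin]; exact h1, ?_⟩
      rw [hagree w (le_of_eq h1)]
      exact h2
  have hDw : Dw (f + h) = Dw f := by
    rw [Dw, Dw, hset]
  refine ⟨hfh, hmin, hDw, ?_⟩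
  rw [lead, lead, hDw, hagree _ (le_of_eq hDlen)]

theorem minLen_neg (f : R σ) : minLen (-f) = minLen f := by
  have : {k | ∃ w : List σ, w.length = k ∧ (-f) w ≠ 0} =
      {k | ∃ w : List σ, w.length = k ∧ f w ≠ 0} := by
    ext k
    simp only [Set.mem_setOf_eq]
    constructor
    · rintro ⟨w, h1, h2⟩
      exact ⟨w, h1, fun hc => h2 (by show -(f w) = 0; rw [hc, neg_zero])⟩
    · rintro ⟨w, h1, h2⟩
      refine ⟨w, h1, fun hc => h2 ?_⟩
      have hc2 : -(f w) = 0 := hc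
      omega
  rw [minLen, this, minLen]

theorem lead_neg (f : R σ) : lead (-f) = - lead f := by
  have hset : levelSet (-f) = levelSet f := by
    ext w
    simp only [levelSet, Set.mem_setOf_eq, minLen_neg]
    constructor
    · rintro ⟨h1, h2⟩
      refine ⟨h1, fun hc => h2 ?_⟩
      show -(f w) = 0
      rw [hc, neg_zero]
    · rintro ⟨h1, h2⟩
      refine ⟨h1, fun hc => h2 ?_⟩
      have hc2 : -(f w) = 0 := hc
      omega
  have hDw : Dw (-f) = Dw f := by
    rw [Dw, Dw, hset]
  rw [lead, lead, hDw]
  rfl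

/-- Adding two series with positive leading coefficients of the same minimal length,
plus higher-order terms, keeps a positive leading coefficient. -/
theorem lead_add_pos {f g h : R σ} (hf : f ≠ 0) (hg : g ≠ 0)
    (hlen : minLen g = minLen f) (hlf : 0 < lead f) (hlg : 0 < lead g)
    (hh : ∀ w : List σ, w.length ≤ minLen f → h w = 0) :
    f + g + h ≠ 0 ∧ 0 < lead (f + g + h) := by
  classical
  set k := minLen f with hk
  have hSne : (levelSet f ∪ levelSet g).Nonempty :=
    (levelSet_nonempty hf).mono Set.subset_union_left
  set m := (IsWellFounded.wf (r := (WellOrderingRel : List σ → List σ → Prop))).min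
    (levelSet f ∪ levelSet g) hSne with hm
  have hmmem : m ∈ levelSet f ∪ levelSet g := WellFounded.min_mem _ _ _
  have hnotlt : ∀ w ∈ levelSet f ∪ levelSet g, ¬ WellOrderingRel w m :=
    fun w hw => WellFounded.not_lt_min _ _ hw
  have hmlen : m.length = k := by
    rcases hmmem with hmf | hmg
    · exact hmf.1
    · rw [hmg.1, hlen]
  have htrich : ∀ w v : List σ, ¬ WellOrderingRel w v → ¬ WellOrderingRel v w → w = v := by
    intro w v h1 h2
    rcases trichotomous_of (WellOrderingRel : List σ → List σ → Prop) w v with h | h | h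
    · exact absurd h h1
    · exact h
    · exact absurd h h2
  have hfm : f m = 0 ∨ f m = lead f := by
    by_cases hfm0 : f m = 0
    · exact Or.inl hfm0
    · right
      have hmemf : m ∈ levelSet f := ⟨hmlen, hfm0⟩
      have h1 : ¬ WellOrderingRel m (Dw f) := not_lt_Dw hf hmemf
      have h2 : ¬ WellOrderingRel (Dw f) m :=
        hnotlt _ (Or.inl (Dw_mem hf))
      rw [lead, htrich m (Dw f) h1 h2]
  have hgm : g m = 0 ∨ g m = lead g := by
    by_cases hgm0 : g m = 0
    · exact Or.inl hgm0
    · right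
      have hmemg : m ∈ levelSet g := ⟨by rw [hmlen, hlen], hgm0⟩
      have h1 : ¬ WellOrderingRel m (Dw g) := not_lt_Dw hg hmemg
      have h2 : ¬ WellOrderingRel (Dw g) m :=
        hnotlt _ (Or.inr (Dw_mem hg))
      rw [lead, htrich m (Dw g) h1 h2]
  have hFm : (f + g + h) m = f m + g m := by
    show f m + g m + h m = f m + g m
    rw [hh m (le_of_eq hmlen), add_zero]
  have hsum_pos : 0 < f m + g m := by
    rcases hmmem with hmf | hmg
    · have h1 : f m = lead f := by
        rcases hfm with h | h
        · exact absurd h hmf.2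
        · exact h
      rcases hgm with h2 | h2 <;> rw [h1, h2] <;> omega
    · have h1 : g m = lead g := by
        rcases hgm with h | h
        · exact absurd h hmg.2
        · exact h
      rcases hfm with h2 | h2 <;> rw [h1, h2] <;> omega
  have hFm0 : (f + g + h) m ≠ 0 := by rw [hFm]; omega
  have hF0 : f + g + h ≠ 0 := fun h0 => by rw [h0] at hFm0; exact hFm0 rfl
  have hminF : minLen (f + g + h) = k := by
    apply minLen_eq_of ⟨m, hmlen, hFm0⟩
    intro w hw
    show f w + g w + h w = 0
    rw [coeff_eq_zero_of_length_lt (by omega : w.length < minLen f),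
      coeff_eq_zero_of_length_lt (by rw [hlen]; omega : w.length < minLen g),
      hh w (by omega), add_zero, add_zero]
  have hsub : levelSet (f + g + h) ⊆ levelSet f ∪ levelSet g := by
    rintro w ⟨hw1, hw2⟩
    rw [hminF] at hw1
    by_cases hfw : f w = 0
    · by_cases hgw : g w = 0
      · exfalso
        apply hw2
        show f w + g w + h w = 0
        rw [hfw, hgw, hh w (le_of_eq hw1), add_zero, add_zero]
      · exact Or.inr ⟨by rw [hw1, hlen], hgw⟩
    · exact Or.inl ⟨hw1, hfw⟩
  have hmF : Dw (f + g + h) = m := by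
    apply htrich
    · exact hnotlt _ (hsub (Dw_mem hF0))
    · exact not_lt_Dw hF0 ⟨by rw [hminF]; exact hmlen, hFm0⟩
  refine ⟨hF0, ?_⟩
  rw [lead, hmF, hFm]
  exact hsum_pos

/-! ### The positive cone on the free group -/

/-- `μ(g) - 1`. -/
def dd (g : FreeGroup σ) : R σ := ((mu σ g : (R σ)ˣ) : R σ) - 1

theorem one_add_dd (g : FreeGroup σ) : 1 + dd g = ((mu σ g : (R σ)ˣ) : R σ) := by
  rw [dd]; abel

theorem dd_nil (g : FreeGroup σ) : dd g [] = 0 := by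
  show ((mu σ g : (R σ)ˣ) : R σ) [] - (1 : R σ) [] = 0
  rw [mu_coeff_nil, one_coeff, if_pos rfl, sub_self]

theorem dd_low (g : FreeGroup σ) : ∀ w : List σ, w.length < 1 → dd g w = 0 := by
  intro w hw
  rcases w with _ | ⟨a, t⟩
  · exact dd_nil g
  · simp at hw

theorem dd_one : dd (1 : FreeGroup σ) = 0 := by
  rw [dd, map_one, Units.val_one, sub_self]

theorem lead_zero : lead (0 : R σ) = 0 := rfl

theorem dd_ne {g : FreeGroup σ} (hg : g ≠ 1) : dd g ≠ 0 := by
  obtain ⟨w, hw1, hw2⟩ := mu_ne_coeff hg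
  intro h0
  have h1 : dd g w = 0 := by rw [h0]; rfl
  have h2 : dd g w = ((mu σ g : (R σ)ˣ) : R σ) w - (1 : R σ) w := rfl
  rw [h2, one_coeff, if_neg hw1, sub_zero] at h1
  exact hw2 h1

theorem vanish_mul {a b : R σ} {p q : ℕ}
    (ha : ∀ w : List σ, w.length < p → a w = 0)
    (hb : ∀ w : List σ, w.length < q → b w = 0) :
    ∀ w : List σ, w.length < p + q → (a * b) w = 0 := by
  intro w hw
  rw [mul_coeff]
  apply Finset.sum_eq_zero
  intro k hk
  simp only [Finset.mem_range] at hk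
  have hlen : (w.take k).length + (w.drop k).length = w.length := by
    rw [List.length_take, List.length_drop]
    omega
  by_cases h1 : (w.take k).length < p
  · rw [ha _ h1, zero_mul]
  · rw [hb _ (by omega), mul_zero]

theorem lead_dd_inv {g : FreeGroup σ} (hg : g ≠ 1) :
    minLen (dd g⁻¹) = minLen (dd g) ∧ lead (dd g⁻¹) = - lead (dd g) := by
  have hmul : (1 + dd g⁻¹) * (1 + dd g) = 1 := by
    rw [one_add_dd, one_add_dd, ← Units.val_mul, ← map_mul, inv_mul_cancel, map_one,
      Units.val_one]
  have h4 : dd g⁻¹ + (dd g + dd g⁻¹ * dd g) = 0 := by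
    have hexp : (1 + dd g⁻¹) * (1 + dd g)
        = 1 + (dd g⁻¹ + (dd g + dd g⁻¹ * dd g)) := by noncomm_ring
    rw [hexp] at hmul
    nth_rewrite 2 [← add_zero (1 : R σ)] at hmul
    exact add_left_cancel hmul
  have key : dd g⁻¹ = -(dd g) + -(dd g⁻¹ * dd g) := by
    rw [← neg_add]
    exact eq_neg_of_add_eq_zero_left h4
  have hvan : ∀ w : List σ, w.length ≤ minLen (-(dd g)) → (-(dd g⁻¹ * dd g)) w = 0 := by
    intro w hw
    rw [minLen_neg] at hw
    show -((dd g⁻¹ * dd g) w) = 0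
    rw [vanish_mul (dd_low g⁻¹) (fun v hv => coeff_eq_zero_of_length_lt hv) w
      (by omega : w.length < 1 + minLen (dd g)), neg_zero]
  have hp := perturb (f := -(dd g)) (h := -(dd g⁻¹ * dd g))
    (neg_ne_zero.mpr (dd_ne hg)) hvan
  rw [← key] at hp
  exact ⟨by rw [hp.2.1, minLen_neg], by rw [hp.2.2.2, lead_neg]⟩

theorem lead_dd_conj (c : FreeGroup σ) {g : FreeGroup σ} (hg : g ≠ 1) :
    minLen (dd (c * g * c⁻¹)) = minLen (dd g) ∧
      lead (dd (c * g * c⁻¹)) = lead (dd g) := by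
  have hab : (1 + dd c) * (1 + dd c⁻¹) = 1 := by
    rw [one_add_dd, one_add_dd, ← Units.val_mul, ← map_mul, mul_inv_cancel, map_one,
      Units.val_one]
  have hprod : 1 + dd (c * g * c⁻¹) = (1 + dd c) * (1 + dd g) * (1 + dd c⁻¹) := by
    rw [one_add_dd, one_add_dd, one_add_dd, one_add_dd, ← Units.val_mul, ← Units.val_mul,
      ← map_mul, ← map_mul]
  have hkey : dd (c * g * c⁻¹) =
      dd g + (dd c * dd g + (dd g * dd c⁻¹ + dd c * dd g * dd c⁻¹)) := by
    have hexp : (1 + dd c) * (1 + dd g) * (1 + dd c⁻¹) =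
        (1 + dd c) * (1 + dd c⁻¹) +
          (dd g + (dd c * dd g + (dd g * dd c⁻¹ + dd c * dd g * dd c⁻¹))) := by
      noncomm_ring
    rw [hexp, hab] at hprod
    exact add_left_cancel hprod
  have hvan : ∀ w : List σ, w.length ≤ minLen (dd g) →
      (dd c * dd g + (dd g * dd c⁻¹ + dd c * dd g * dd c⁻¹)) w = 0 := by
    intro w hw
    show (dd c * dd g) w + ((dd g * dd c⁻¹) w + (dd c * dd g * dd c⁻¹) w) = 0
    rw [vanish_mul (dd_low c) (fun v hv => coeff_eq_zero_of_length_lt hv) w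
        (by omega : w.length < 1 + minLen (dd g)),
      vanish_mul (fun v hv => coeff_eq_zero_of_length_lt hv) (dd_low c⁻¹) w
        (by omega : w.length < minLen (dd g) + 1),
      vanish_mul (p := 1 + minLen (dd g)) (q := 0)
        (vanish_mul (dd_low c) (fun v hv => coeff_eq_zero_of_length_lt hv))
        (fun v hv => absurd hv (Nat.not_lt_zero _)) w (by omega)]
    simp
  have hp := perturb (f := dd g) (dd_ne hg) hvan
  rw [← hkey] at hp
  exact ⟨hp.2.1, hp.2.2.2⟩

theorem lead_dd_mul {g h : FreeGroup σ} (hg : g ≠ 1) (hh : h ≠ 1)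
    (hg' : 0 < lead (dd g)) (hh' : 0 < lead (dd h)) :
    g * h ≠ 1 ∧ 0 < lead (dd (g * h)) := by
  have hd := dd_ne hg
  have he := dd_ne hh
  have hkey : dd (g * h) = dd g + dd h + dd g * dd h := by
    have hprod : 1 + dd (g * h) = (1 + dd g) * (1 + dd h) := by
      rw [one_add_dd, one_add_dd, one_add_dd, ← Units.val_mul, ← map_mul]
    have hexp : (1 + dd g) * (1 + dd h) = 1 + (dd g + dd h + dd g * dd h) := by
      noncomm_ring
    rw [hexp] at hprod
    exact add_left_cancel hprod
  have hgh_ne_of : dd (g * h) ≠ 0 → g * h ≠ 1 := fun hne h1 => hne (by rw [h1, dd_one])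
  rcases lt_trichotomy (minLen (dd g)) (minLen (dd h)) with hlt | heq | hgt
  · have hvan : ∀ w : List σ, w.length ≤ minLen (dd g) → (dd h + dd g * dd h) w = 0 := by
      intro w hw
      show dd h w + (dd g * dd h) w = 0
      rw [coeff_eq_zero_of_length_lt (f := dd h) (by omega),
        vanish_mul (fun v hv => coeff_eq_zero_of_length_lt hv) (dd_low h) w (by omega),
        add_zero]
    have hp := perturb (f := dd g) hd hvan
    have hsum : dd g + (dd h + dd g * dd h) = dd (g * h) := by rw [hkey]; abel
    rw [hsum] at hp
    exact ⟨hgh_ne_of hp.1, by rw [hp.2.2.2]; exact hg'⟩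
  · have hvan : ∀ w : List σ, w.length ≤ minLen (dd g) → (dd g * dd h) w = 0 :=
      fun w hw => vanish_mul (fun v hv => coeff_eq_zero_of_length_lt hv) (dd_low h) w
        (by omega)
    have hp := lead_add_pos hd he heq.symm hg' hh' hvan
    rw [← hkey] at hp
    exact ⟨hgh_ne_of hp.1, hp.2⟩
  · have hvan : ∀ w : List σ, w.length ≤ minLen (dd h) → (dd g + dd g * dd h) w = 0 := by
      intro w hw
      show dd g w + (dd g * dd h) w = 0
      rw [coeff_eq_zero_of_length_lt (f := dd g) (by omega),
        vanish_mul (fun v hv => coeff_eq_zero_of_length_lt (f := dd g) hv) (dd_low h) w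
          (by omega),
        add_zero]
    have hp := perturb (f := dd h) he hvan
    have hsum : dd h + (dd g + dd g * dd h) = dd (g * h) := by rw [hkey]; abel
    rw [hsum] at hp
    exact ⟨hgh_ne_of hp.1, by rw [hp.2.2.2]; exact hh'⟩

/-- The positive cone. -/
def Pos (g : FreeGroup σ) : Prop := 0 < lead (dd g)

theorem Pos_ne_one {g : FreeGroup σ} (h : Pos g) : g ≠ 1 := by
  intro h1
  rw [Pos, h1, dd_one, lead_zero] at h
  exact lt_irrefl 0 h

theorem Pos_mul {g h : FreeGroup σ} (hg : Pos g) (hh : Pos h) : Pos (g * h) :=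
  (lead_dd_mul (Pos_ne_one hg) (Pos_ne_one hh) hg hh).2

theorem Pos_trichot {g : FreeGroup σ} (hg : g ≠ 1) : Pos g ∨ Pos g⁻¹ := by
  have h1 := lead_ne_zero (dd_ne hg)
  rcases h1.lt_or_gt with h | h
  · right
    rw [Pos, (lead_dd_inv hg).2]
    omega
  · exact Or.inl h

theorem Pos_conj (c : FreeGroup σ) {g : FreeGroup σ} (hg : Pos g) :
    Pos (c * g * c⁻¹) := by
  rw [Pos, (lead_dd_conj c (Pos_ne_one hg)).2]
  exact hg

theorem not_Pos_both {g : FreeGroup σ} (h1 : Pos g) (h2 : Pos g⁻¹) : False := by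
  have h3 := (lead_dd_inv (Pos_ne_one h1)).2
  rw [Pos] at h1 h2
  omega

end
end MagnusOrder


/-- A bi-ordering on a group: a strict total order invariant under left and
right multiplication. -/
def IsBiOrdering {G : Type*} [Group G] (lt : G → G → Prop) : Prop :=
  IsStrictTotalOrder G lt ∧ (∀ a b c : G, lt a b → lt (c * a) (c * b)) ∧
    (∀ a b c : G, lt a b → lt (a * c) (b * c))

/-- The free group `Fₙ` of rank `n` is bi-orderable. -/
theorem freeGroup_biOrderable (n : ℕ) :
    ∃ lt : FreeGroup (Fin n) → FreeGroup (Fin n) → Prop, IsBiOrdering lt := by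
  refine ⟨fun a b => MagnusOrder.Pos (a⁻¹ * b),
    { toTrichotomous := ⟨?_⟩,
      toIsStrictOrder := { toIrrefl := ⟨?_⟩, toIsTrans := ⟨?_⟩ } }, ?_, ?_⟩
  · -- trichotomous
    intro a b h1 h2
    by_contra hab
    have hx : a⁻¹ * b ≠ 1 := by
      intro h
      exact hab (by rw [← mul_one a, ← h]; group)
    rcases MagnusOrder.Pos_trichot hx with h | h
    · exact h1 h
    · have he : (a⁻¹ * b)⁻¹ = b⁻¹ * a := by group
      rw [he] at h
      exact h2 h
  · -- irreflexive
    intro a h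
    have he : a⁻¹ * a = 1 := by group
    rw [he] at h
    exact MagnusOrder.Pos_ne_one h rfl
  · -- transitive
    intro a b c h1 h2
    have he : a⁻¹ * c = (a⁻¹ * b) * (b⁻¹ * c) := by group
    show MagnusOrder.Pos (a⁻¹ * c)
    rw [he]
    exact MagnusOrder.Pos_mul h1 h2
  · -- left invariance
    intro a b c h
    show MagnusOrder.Pos ((c * a)⁻¹ * (c * b))
    have he : (c * a)⁻¹ * (c * b) = a⁻¹ * b := by group
    rwa [he]
  · -- right invariance
    intro a b c h
    show MagnusOrder.Pos ((a * c)⁻¹ * (b * c))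
    have he : (a * c)⁻¹ * (b * c) = c⁻¹ * (a⁻¹ * b) * (c⁻¹)⁻¹ := by group
    rw [he]
    exact MagnusOrder.Pos_conj _ h
end

section
/- An iterated semidirect product of free groups in which each action induces the identity on the abelianization of each free factor (an almost-direct product of free groups) is bi-orderable, with the lexicographic order built from the Magnus orders on the free factors. -/
set_option linter.dupNamespace false

namespace MagnusDev

variable {r : ℕ}



/-- Non-commutative power series in `r` variables over `ℤ`, as coefficient functions on words. -/
abbrev P (r : ℕ) := List (Fin r) → ℤ

def conv (f g : P r) : P r := fun w =>
  ∑ m ∈ Finset.range (w.length + 1), f (w.take m) * g (w.drop m)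

def oneP : P r := fun w => if w = [] then 1 else 0

@[simp] lemma oneP_nil : (oneP : P r) [] = 1 := rfl

lemma oneP_ne_nil {w : List (Fin r)} (h : w ≠ []) : (oneP : P r) w = 0 := by
  simp [oneP, h]

lemma conv_nil (f g : P r) : conv f g [] = f [] * g [] := by
  simp [conv]

lemma one_conv (f : P r) : conv oneP f = f := by
  funext w
  rw [conv, Finset.sum_eq_single 0]
  · simp
  · intro b hb hbne
    have h : w.take b ≠ [] := by
      intro h
      rcases List.take_eq_nil_iff.mp h with h' | h'
      · exact hbne h'
      · subst h'; simp at hb; omega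
    simp [oneP_ne_nil h]
  · intro h; simp at h

lemma conv_one (f : P r) : conv f oneP = f := by
  funext w
  rw [conv, Finset.sum_eq_single w.length]
  · simp
  · intro b hb hbne
    have hb' : b < w.length := by
      simp only [Finset.mem_range] at hb; omega
    have : w.drop b ≠ [] := by
      intro h
      have := congrArg List.length h
      simp at this; omega
    simp [oneP_ne_nil this]
  · intro h; simp at h

lemma conv_assoc (f g h : P r) : conv (conv f g) h = conv f (conv g h) := by
  funext w
  set n := w.length with hn
  have L : conv (conv f g) h w =
      ∑ p ∈ (Finset.range (n+1)).sigma (fun i => Finset.range (i+1)),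
        f (w.take p.2) * (g ((w.drop p.2).take (p.1 - p.2)) * h (w.drop p.1)) := by
    rw [conv, Finset.sum_sigma]
    refine Finset.sum_congr rfl ?_
    intro i hi
    simp only [Finset.mem_range] at hi
    rw [conv]
    have hlen : (w.take i).length = i := by
      rw [List.length_take]; omega
    rw [hlen, Finset.sum_mul]
    refine Finset.sum_congr rfl ?_
    intro j hj
    simp only [Finset.mem_range] at hj
    have h1 : List.take j (List.take i w) = List.take j w := by
      rw [List.take_take]
      congr 1
      omega
    have h2 : List.drop j (List.take i w) = List.take (i - j) (List.drop j w) :=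
      List.drop_take
    rw [h1, h2, mul_assoc]
  have R : conv f (conv g h) w =
      ∑ p ∈ (Finset.range (n+1)).sigma (fun j => Finset.range (n - j + 1)),
        f (w.take p.1) * (g ((w.drop p.1).take p.2) * h (w.drop (p.1 + p.2))) := by
    rw [conv, Finset.sum_sigma]
    refine Finset.sum_congr rfl ?_
    intro j hj
    simp only [Finset.mem_range] at hj
    rw [conv]
    have hlen : (w.drop j).length = n - j := by
      rw [List.length_drop]
    rw [hlen, Finset.mul_sum]
    refine Finset.sum_congr rfl ?_
    intro k hk
    rw [List.drop_drop]
  rw [L, R]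
  refine Finset.sum_nbij' (fun p => ⟨p.2, p.1 - p.2⟩) (fun p => ⟨p.1 + p.2, p.1⟩) ?_ ?_ ?_ ?_ ?_
  · intro p hp
    simp only [Finset.mem_sigma, Finset.mem_range] at *
    omega
  · intro p hp
    simp only [Finset.mem_sigma, Finset.mem_range] at *
    omega
  · intro p hp
    obtain ⟨i, j⟩ := p
    simp only [Finset.mem_sigma, Finset.mem_range] at hp
    show (⟨j + (i - j), j⟩ : (_ : ℕ) × ℕ) = ⟨i, j⟩
    have : j + (i - j) = i := by omega
    rw [this]
  · intro p hp
    obtain ⟨j, k⟩ := p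
    simp only [Finset.mem_sigma, Finset.mem_range] at hp
    show (⟨j, j + k - j⟩ : (_ : ℕ) × ℕ) = ⟨j, k⟩
    have : j + k - j = k := by omega
    rw [this]
  · intro p hp
    obtain ⟨i, j⟩ := p
    simp only [Finset.mem_sigma, Finset.mem_range] at hp
    show f (w.take j) * (g ((w.drop j).take (i - j)) * h (w.drop i)) =
      f (w.take j) * (g ((w.drop j).take (i - j)) * h (w.drop (j + (i - j))))
    have : j + (i - j) = i := by omega
    rw [this]




lemma add_conv (f g h : P r) : conv (f + g) h = conv f h + conv g h := by
  funext w
  simp [conv, add_mul, Finset.sum_add_distrib]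

lemma conv_add (f g h : P r) : conv f (g + h) = conv f g + conv f h := by
  funext w
  simp [conv, mul_add, Finset.sum_add_distrib]

lemma sub_conv (f g h : P r) : conv (f - g) h = conv f h - conv g h := by
  funext w
  simp [conv, sub_mul, Finset.sum_sub_distrib]

lemma conv_sub (f g h : P r) : conv f (g - h) = conv f g - conv f h := by
  funext w
  simp [conv, mul_sub, Finset.sum_sub_distrib]

/-- Inverse of a power series with constant term 1. -/
def minv (f : P r) : P r
  | [] => 1
  | a :: w => -∑ k ∈ Finset.range (w.length + 1),
      f ((a :: w).take (k+1)) * minv f (w.drop k)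
  termination_by w => w.length
  decreasing_by simp [List.length_drop]

@[simp] lemma minv_nil (f : P r) : minv f [] = 1 := by
  simp [minv.eq_1]

lemma minv_cons (f : P r) (a : Fin r) (w : List (Fin r)) :
    minv f (a :: w) = -∑ k ∈ Finset.range (w.length + 1),
      f ((a :: w).take (k+1)) * minv f (w.drop k) := by
  rw [minv.eq_2]

lemma conv_minv (f : P r) (hf : f [] = 1) : conv f (minv f) = oneP := by
  funext w
  rcases w with _ | ⟨a, t⟩
  · simp [conv_nil, hf]
  · rw [conv]
    have hlen : (a :: t).length = t.length + 1 := rfl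
    rw [hlen, Finset.sum_range_succ']
    have h0 : f (List.take 0 (a :: t)) * minv f (List.drop 0 (a :: t)) = minv f (a :: t) := by
      simp [hf]
    rw [h0]
    have hs : ∀ k, f (List.take (k+1) (a :: t)) * minv f (List.drop (k+1) (a :: t))
        = f ((a :: t).take (k+1)) * minv f (t.drop k) := by
      intro k; rfl
    have : ∑ k ∈ Finset.range (t.length + 1),
        f (List.take (k+1) (a :: t)) * minv f (List.drop (k+1) (a :: t))
        = ∑ k ∈ Finset.range (t.length + 1), f ((a :: t).take (k+1)) * minv f (t.drop k) :=
      Finset.sum_congr rfl fun k _ => hs k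
    rw [this, minv_cons]
    have hne : (a :: t) ≠ ([] : List (Fin r)) := by simp
    rw [oneP_ne_nil hne]
    ring

/-- The group of power series with constant term `1`. -/
abbrev G0 (r : ℕ) := {f : P r // f [] = 1}

instance : Monoid (G0 r) where
  mul a b := ⟨conv a.1 b.1, by rw [conv_nil, a.2, b.2]; ring⟩
  one := ⟨oneP, rfl⟩
  mul_assoc a b c := Subtype.ext (conv_assoc a.1 b.1 c.1)
  one_mul a := Subtype.ext (one_conv a.1)
  mul_one a := Subtype.ext (conv_one a.1)

@[simp] lemma mul_val (a b : G0 r) : (a * b).1 = conv a.1 b.1 := rfl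
@[simp] lemma one_val : (1 : G0 r).1 = oneP := rfl

lemma mul_minv' (a : G0 r) : a * ⟨minv a.1, minv_nil a.1⟩ = 1 :=
  Subtype.ext (conv_minv a.1 a.2)

instance : Group (G0 r) where
  inv a := ⟨minv a.1, minv_nil a.1⟩
  inv_mul_cancel a := by
    set b : G0 r := ⟨minv a.1, minv_nil a.1⟩ with hb
    have h1 : a * b = 1 := mul_minv' a
    have h2 : b * ⟨minv b.1, minv_nil b.1⟩ = 1 := mul_minv' b
    set c : G0 r := ⟨minv b.1, minv_nil b.1⟩ with hc
    show b * a = 1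
    calc b * a = b * a * (b * c) := by rw [h2, mul_one]
    _ = b * (a * b) * c := by simp [mul_assoc]
    _ = b * c := by rw [h1, mul_one]
    _ = 1 := h2

@[simp] lemma inv_val (a : G0 r) : (a⁻¹).1 = minv a.1 := rfl



/-! ### The Magnus generators -/

def xe (i : Fin r) : P r := fun w => if w = [] ∨ w = [i] then 1 else 0

def ye (i : Fin r) : P r := fun w => if ∀ c ∈ w, c = i then (-1 : ℤ)^w.length else 0

def Xi (i : Fin r) : P r := fun w => if w = [i] then 1 else 0

@[simp] lemma xe_nil (i : Fin r) : xe i [] = 1 := by simp [xe]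
@[simp] lemma ye_nil (i : Fin r) : ye i [] = 1 := by simp [ye]

lemma ye_replicate (i : Fin r) (m : ℕ) : ye i (List.replicate m i) = (-1)^m := by
  have h : ∀ c ∈ List.replicate m i, c = i := fun c hc => (List.mem_replicate.mp hc).2
  rw [ye, if_pos h, List.length_replicate]

lemma xe_eq (i : Fin r) : xe i = oneP + Xi i := by
  funext w
  rcases eq_or_ne w [] with rfl | h
  · simp [xe, oneP, Xi]
  · rcases eq_or_ne w [i] with rfl | h2
    · simp [xe, oneP, Xi]
    · simp [xe, oneP, Xi, h, h2]

lemma Xi_conv_nil (i : Fin r) (f : P r) : conv (Xi i) f [] = 0 := by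
  simp [conv_nil, Xi]

lemma Xi_conv_cons (i : Fin r) (f : P r) (a : Fin r) (t : List (Fin r)) :
    conv (Xi i) f (a :: t) = if a = i then f t else 0 := by
  rw [conv, Finset.sum_eq_single 1]
  · have h1 : List.take 1 (a :: t) = [a] := rfl
    have h2 : List.drop 1 (a :: t) = t := rfl
    rw [h1, h2, Xi]
    by_cases h : a = i
    · simp [h]
    · have : ([a] : List (Fin r)) ≠ [i] := by simpa using h
      simp [this, h]
  · intro b hb hbne
    rcases Nat.eq_zero_or_pos b with rfl | hpos
    · simp [Xi]
    · have hb2 : 2 ≤ b := by omega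
      have : List.take b (a :: t) ≠ [i] := by
        intro h
        have := congrArg List.length h
        simp only [List.length_take, List.length_cons] at this
        simp only [Finset.mem_range, List.length_cons] at hb
        simp at this
        omega
      simp [Xi, this]
  · intro h
    simp at h

lemma conv_xe (i : Fin r) (f : P r) : conv (xe i) f = f + conv (Xi i) f := by
  rw [xe_eq, add_conv, one_conv]

lemma xe_ye (i : Fin r) : conv (xe i) (ye i) = oneP := by
  rw [conv_xe]
  funext w
  rcases w with _ | ⟨a, t⟩
  · simp [Xi_conv_nil]
  · rw [Pi.add_apply, Xi_conv_cons]
    have hne : (a :: t) ≠ ([] : List (Fin r)) := by simp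
    rw [oneP_ne_nil hne]
    by_cases ha : a = i
    · subst ha
      rw [if_pos rfl]
      by_cases ht : ∀ c ∈ t, c = a
      · have h1 : ∀ c ∈ (a :: t), c = a := by
          intro c hc
          rcases List.mem_cons.mp hc with rfl | hc
          · rfl
          · exact ht c hc
        rw [ye, ye, if_pos h1, if_pos ht]
        simp only [List.length_cons, pow_succ]
        ring
      · have h1 : ¬ ∀ c ∈ (a :: t), c = a := by
          intro h; exact ht fun c hc => h c (List.mem_cons_of_mem _ hc)
        rw [ye, ye, if_neg h1, if_neg ht]
        simp
    · have h1 : ¬ ∀ c ∈ (a :: t), c = i := by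
        intro h; exact ha (h a List.mem_cons_self)
      rw [ye, if_neg h1, if_neg ha]
      simp

def XG (i : Fin r) : G0 r := ⟨xe i, by simp⟩
def YG (i : Fin r) : G0 r := ⟨ye i, by simp⟩

lemma XG_inv (i : Fin r) : (XG i)⁻¹ = YG i :=
  inv_eq_of_mul_eq_one_right (Subtype.ext (xe_ye i))

/-- The Magnus homomorphism. -/
def mu : FreeGroup (Fin r) →* G0 r := FreeGroup.lift XG

def mprod (l : List (P r)) : P r := l.foldr conv oneP

@[simp] lemma mprod_nil : mprod ([] : List (P r)) = oneP := rfl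
@[simp] lemma mprod_cons (f : P r) (l : List (P r)) : mprod (f :: l) = conv f (mprod l) := rfl

lemma mprod_append (l₁ l₂ : List (P r)) :
    mprod (l₁ ++ l₂) = conv (mprod l₁) (mprod l₂) := by
  induction l₁ with
  | nil => simp [one_conv]
  | cons a l ih => simp [ih, conv_assoc]

lemma val_list_prod : ∀ l : List (G0 r), (l.prod).1 = mprod (l.map Subtype.val)
  | [] => rfl
  | a :: l => by
    rw [List.prod_cons, List.map_cons, mprod_cons, mul_val, val_list_prod l]

def PE (L : List (Fin r × Bool)) : P r :=
  mprod (L.map fun x => if x.2 then xe x.1 else ye x.1)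

lemma mu_mk_val (L : List (Fin r × Bool)) : (mu (FreeGroup.mk L)).1 = PE L := by
  rw [mu, FreeGroup.lift_mk, val_list_prod, List.map_map, PE]
  have hmap : List.map (Subtype.val ∘ fun x => bif x.2 then XG x.1 else (XG x.1)⁻¹) L
      = L.map (fun x => if x.2 then xe x.1 else ye x.1) := by
    apply List.map_congr_left
    intro x _
    rcases x with ⟨i, b⟩
    cases b
    · show ((XG i)⁻¹).1 = _
      rw [XG_inv]
      rfl
    · rfl
  rw [hmap]

/-! ### Supports -/

def PowSupp (i : Fin r) (f : P r) : Prop := ∀ w, f w ≠ 0 → ∃ a, w = List.replicate a i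

lemma powSupp_xe (i : Fin r) : PowSupp i (xe i) := by
  intro w hw
  rw [xe] at hw
  rcases eq_or_ne w [] with rfl | h
  · exact ⟨0, rfl⟩
  · rcases eq_or_ne w [i] with rfl | h2
    · exact ⟨1, rfl⟩
    · simp [h, h2] at hw

lemma powSupp_ye (i : Fin r) : PowSupp i (ye i) := by
  intro w hw
  rw [ye] at hw
  by_cases h : ∀ c ∈ w, c = i
  · exact ⟨w.length, List.eq_replicate_iff.mpr ⟨rfl, h⟩⟩
  · simp [h] at hw

lemma powSupp_conv {i : Fin r} {f g : P r} (hf : PowSupp i f) (hg : PowSupp i g) :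
    PowSupp i (conv f g) := by
  intro w hw
  rw [conv] at hw
  obtain ⟨m, _, hm⟩ := Finset.exists_ne_zero_of_sum_ne_zero hw
  have h1 : f (w.take m) ≠ 0 := fun h => hm (by rw [h, zero_mul])
  have h2 : g (w.drop m) ≠ 0 := fun h => hm (by rw [h, mul_zero])
  obtain ⟨a, ha⟩ := hf _ h1
  obtain ⟨b, hb⟩ := hg _ h2
  exact ⟨a + b, by rw [← List.take_append_drop m w, ha, hb, List.replicate_add]⟩

def DegLe (k : ℕ) (f : P r) : Prop := ∀ w : List (Fin r), k < w.length → f w = 0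

def DegGe (k : ℕ) (f : P r) : Prop := ∀ w : List (Fin r), w.length < k → f w = 0

lemma degLe_xe (i : Fin r) : DegLe 1 (xe i) := by
  intro w hw
  rw [xe]
  rcases w with _ | ⟨a, t⟩
  · simp at hw
  · rcases t with _ | ⟨b, s⟩
    · simp at hw
    · have h1 : (a :: b :: s) ≠ ([] : List (Fin r)) := by simp
      have h2 : (a :: b :: s) ≠ [i] := by simp
      simp [h1, h2]

lemma degLe_oneP : DegLe 0 (oneP : P r) := by
  intro w hw
  apply oneP_ne_nil
  intro h; subst h; simp at hw

lemma degLe_conv {a b : ℕ} {f g : P r} (hf : DegLe a f) (hg : DegLe b g) :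
    DegLe (a + b) (conv f g) := by
  intro w hw
  rw [conv]
  apply Finset.sum_eq_zero
  intro m hm
  simp only [Finset.mem_range] at hm
  by_cases h : a < m
  · rw [hf (w.take m) (by rw [List.length_take]; omega), zero_mul]
  · rw [hg (w.drop m) (by rw [List.length_drop]; omega), mul_zero]

/-! ### The language of in-order runs -/

inductive InLang : List (Fin r) → List (Fin r) → Prop
  | nil : InLang [] []
  | cons (a : ℕ) (i : Fin r) {ls w : List (Fin r)} :
      InLang ls w → InLang (i :: ls) (List.replicate a i ++ w)

lemma inLang_nil {w : List (Fin r)} (h : InLang [] w) : w = [] := by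
  cases h; rfl

lemma inLang_cons_inv {l : Fin r} {tl w : List (Fin r)} (h : InLang (l :: tl) w) :
    ∃ a w', w = List.replicate a l ++ w' ∧ InLang tl w' := by
  cases h with
  | cons a i hw => exact ⟨a, _, rfl, hw⟩

lemma PE_supp : ∀ (L : List (Fin r × Bool)) (w : List (Fin r)),
    PE L w ≠ 0 → InLang (L.map Prod.fst) w := by
  intro L
  induction L with
  | nil =>
    intro w hw
    rw [PE] at hw
    simp only [List.map_nil, mprod_nil] at hw
    have : w = [] := by
      by_contra h
      exact hw (oneP_ne_nil h)
    subst this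
    exact InLang.nil
  | cons x L ih =>
    intro w hw
    rw [PE, List.map_cons, mprod_cons] at hw
    rw [conv] at hw
    obtain ⟨m, _, hm⟩ := Finset.exists_ne_zero_of_sum_ne_zero hw
    have h1 : (if x.2 then xe x.1 else ye x.1) (w.take m) ≠ 0 :=
      fun h => hm (by rw [h, zero_mul])
    have h2 : PE L (w.drop m) ≠ 0 := fun h => hm (by rw [PE] at h; rw [h, mul_zero])
    have hx : PowSupp x.1 (if x.2 then xe x.1 else ye x.1) := by
      cases hb : x.2
      · simp only [hb, Bool.false_eq_true, if_false]; exact powSupp_ye x.1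
      · simp only [hb, if_true]; exact powSupp_xe x.1
    obtain ⟨a, ha⟩ := hx _ h1
    have hr := ih _ h2
    rw [List.map_cons, ← List.take_append_drop m w, ha]
    exact InLang.cons a x.1 hr

lemma keyV : ∀ (ls u : List (Fin r)) (l : Fin r) (ls' : List (Fin r)),
    ls = l :: ls' → InLang ls (u ++ ls) → ∀ c ∈ u, c = l := by
  intro ls
  induction ls with
  | nil => intro u l ls' h; exact absurd h (by simp)
  | cons l₀ tl ih =>
    intro u l ls' heq hin c hc
    injection heq with h1 h2
    subst h1
    subst h2
    obtain ⟨a, w', hw, hin'⟩ := inLang_cons_inv hin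
    by_cases hle : u.length ≤ a
    · have hu : u = List.take u.length (List.replicate a l₀ ++ w') := by
        rw [← hw, List.take_append_of_le_length (by simp), List.take_length]
      rw [List.take_append_of_le_length (by simpa using hle), List.take_replicate] at hu
      rw [hu] at hc
      exact (List.mem_replicate.mp hc).2
    · push_neg at hle
      have htake : List.take a u = List.replicate a l₀ := by
        have h := congrArg (List.take a) hw
        rw [List.take_append_of_le_length (le_of_lt hle),
            List.take_append_of_le_length (by simp), List.take_replicate,
            Nat.min_self] at h
        exact h
      have hdrop : w' = List.drop a u ++ (l₀ :: tl) := by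
        have h := congrArg (List.drop a) hw
        rw [List.drop_append, List.drop_append] at h
        have e1 : a - u.length = 0 := by omega
        have e2 : List.drop a (List.replicate a l₀) = ([] : List (Fin r)) := by
          rw [List.drop_replicate]; simp
        rw [e1, e2, List.drop_zero, List.nil_append] at h
        have e3 : a - (List.replicate a l₀).length = 0 := by simp
        rw [e3, List.drop_zero] at h
        exact h.symm
      rcases htl : tl with _ | ⟨l₂, tl₂⟩
      · rw [htl] at hin' hdrop
        have h0 := inLang_nil hin'
        rw [hdrop] at h0
        simp at h0
      · have hin'' : InLang tl ((List.drop a u ++ [l₀]) ++ tl) := by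
          rw [List.append_assoc, List.singleton_append, ← hdrop]
          exact hin'
        have hall := ih (List.drop a u ++ [l₀]) l₂ tl₂ htl hin''
        have hl : l₀ = l₂ := hall l₀ (by simp)
        have hc' : c ∈ List.take a u ++ List.drop a u := by
          rw [List.take_append_drop]; exact hc
        rcases List.mem_append.mp hc' with hc1 | hc2
        · rw [htake] at hc1
          exact (List.mem_replicate.mp hc1).2
        · rw [← hl] at hall
          exact hall c (List.mem_append_left _ hc2)

/-! ### Evaluation of run products -/

lemma powSupp_mprod_replicate {i : Fin r} {Z : P r} (hZ : PowSupp i Z) (k : ℕ) :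
    PowSupp i (mprod (List.replicate k Z)) := by
  induction k with
  | zero =>
    intro w hw
    simp only [List.replicate_zero, mprod_nil] at hw
    exact ⟨0, by_contra fun h => hw (oneP_ne_nil (fun he => h (by rw [he]; rfl)))⟩
  | succ k ih =>
    rw [List.replicate_succ, mprod_cons]
    exact powSupp_conv hZ ih

lemma degLe_mprod_replicate {Z : P r} (hZ : DegLe 1 Z) (k : ℕ) :
    DegLe k (mprod (List.replicate k Z)) := by
  induction k with
  | zero => simpa using degLe_oneP
  | succ k ih =>
    rw [List.replicate_succ, mprod_cons]
    have := degLe_conv hZ ih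
    rwa [Nat.add_comm] at this

/-- Main evaluation: a product `A * B` with `A` supported on powers of `i`,
evaluated at `replicate k i ++ v` where `v` does not start with `i`. -/
lemma conv_powSupp_apply {i : Fin r} {A B : P r} (hA : PowSupp i A) (k : ℕ)
    (v : List (Fin r)) (hv : ∀ c, v.head? = some c → c ≠ i) :
    conv A B (List.replicate k i ++ v) =
      ∑ m ∈ Finset.range (k+1), A (List.replicate m i) * B (List.replicate (k-m) i ++ v) := by
  rw [conv]
  have hlen : (List.replicate k i ++ v).length = k + v.length := by simp
  rw [hlen]
  rw [← Finset.sum_subset (Finset.range_subset_range.mpr (by omega : k + 1 ≤ k + v.length + 1))]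
  · apply Finset.sum_congr rfl
    intro m hm
    simp only [Finset.mem_range] at hm
    have hm' : m ≤ k := by omega
    have ht : List.take m (List.replicate k i ++ v) = List.replicate m i := by
      rw [List.take_append_of_le_length (by simp; omega), List.take_replicate]
      congr 1
      omega
    have hd : List.drop m (List.replicate k i ++ v) = List.replicate (k-m) i ++ v := by
      rw [List.drop_append, List.drop_replicate]
      have : m - (List.replicate k i).length = 0 := by simp; omega
      rw [this, List.drop_zero]
    rw [ht, hd]
  · intro m hm hnot
    simp only [Finset.mem_range] at hm hnot
    have hmk : k < m := by omega
    have hvne : v ≠ [] := by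
      intro h
      subst h
      simp at hm
      omega
    rcases v with _ | ⟨c, v'⟩
    · exact absurd rfl hvne
    have hc : c ≠ i := hv c rfl
    have : A (List.take m (List.replicate k i ++ c :: v')) = 0 := by
      by_contra h
      obtain ⟨a, ha⟩ := hA _ h
      have : c ∈ List.take m (List.replicate k i ++ c :: v') := by
        rw [List.take_append, List.take_replicate]
        apply List.mem_append_right
        have : m - (List.replicate k i).length = m - k := by simp
        rw [this]
        have h1 : m - k ≠ 0 := by omega
        rcases Nat.exists_eq_succ_of_ne_zero h1 with ⟨j, hj⟩
        rw [hj, List.take_succ_cons]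
        exact List.mem_cons_self
      rw [ha] at this
      exact hc (List.mem_replicate.mp this).2
    rw [this, zero_mul]

/-! ### Values on pure powers -/

lemma mprod_xe_replicate (i : Fin r) (k : ℕ) :
    mprod (List.replicate k (xe i)) (List.replicate k i) = 1 := by
  induction k with
  | zero => simp
  | succ k ih =>
    rw [List.replicate_succ, mprod_cons, conv_xe, Pi.add_apply]
    have h1 : mprod (List.replicate k (xe i)) (List.replicate (k+1) i) = 0 :=
      degLe_mprod_replicate (degLe_xe i) k _ (by simp)
    rw [h1, List.replicate_succ, Xi_conv_cons, if_pos rfl, ih]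
    ring

lemma mprod_ye_replicate_pos (i : Fin r) :
    ∀ k, 1 ≤ k → ∀ m, 0 < (-1 : ℤ)^m * mprod (List.replicate k (ye i)) (List.replicate m i) := by
  intro k
  induction k with
  | zero => omega
  | succ k ih =>
    intro _ m
    rcases Nat.eq_zero_or_pos k with rfl | hk
    · rw [List.replicate_succ, List.replicate_zero, mprod_cons, mprod_nil, conv_one,
        ye_replicate, ← mul_pow]
      simp
    · rw [List.replicate_succ, mprod_cons, conv]
      have hlen : (List.replicate m i).length = m := by simp
      rw [hlen]
      have hterm : ∀ j ∈ Finset.range (m+1),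
          ye i (List.take j (List.replicate m i)) *
            mprod (List.replicate k (ye i)) (List.drop j (List.replicate m i))
          = (-1:ℤ)^j * mprod (List.replicate k (ye i)) (List.replicate (m-j) i) := by
        intro j hj
        simp only [Finset.mem_range] at hj
        rw [List.take_replicate, List.drop_replicate]
        have : min j m = j := by omega
        rw [this, ye_replicate]
      rw [Finset.sum_congr rfl hterm, Finset.mul_sum]
      apply Finset.sum_pos
      · intro j hj
        simp only [Finset.mem_range] at hj
        have hpos := ih hk (m - j)
        have hsplit : (-1:ℤ)^m = (-1)^(m-j) * (-1)^j := by
          rw [← pow_add]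
          congr 1
          omega
        have : (-1:ℤ)^m * ((-1)^j * mprod (List.replicate k (ye i)) (List.replicate (m-j) i))
            = ((-1)^j * (-1)^j) * ((-1)^(m-j) * mprod (List.replicate k (ye i)) (List.replicate (m-j) i)) := by
          rw [hsplit]; ring
        rw [this, ← mul_pow]
        simpa using hpos
      · exact ⟨0, by simp⟩

lemma mprod_Z_replicate_ne_zero (i : Fin r) (e : Bool) (k : ℕ) (hk : 1 ≤ k) :
    mprod (List.replicate k (if e then xe i else ye i)) (List.replicate k i) ≠ 0 := by
  cases e
  · simp only [Bool.false_eq_true, if_false]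
    intro h
    have := mprod_ye_replicate_pos i k hk k
    rw [h, mul_zero] at this
    exact lt_irrefl 0 this
  · simp only [if_true]
    rw [mprod_xe_replicate]
    exact one_ne_zero

lemma dropWhile_head_not {α : Type*} (p : α → Bool) :
    ∀ (l : List α) (y : α) (t : List α), List.dropWhile p l = y :: t → ¬ p y := by
  intro l
  induction l with
  | nil => intro y t h; simp at h
  | cons a l ih =>
    intro y t h
    rw [List.dropWhile_cons] at h
    by_cases hpa : p a
    · rw [if_pos hpa] at h
      exact ih y t h
    · rw [if_neg hpa] at h
      injection h with h1 h2
      subst h1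
      exact hpa

/-! ### Reduced words -/

def RedW (L : List (Fin r × Bool)) : Prop :=
  ∀ (L₂ : List (Fin r × Bool)) (x : Fin r) (b : Bool) (L₃ : List (Fin r × Bool)),
    L ≠ L₂ ++ (x, b) :: (x, !b) :: L₃

lemma redW_toWord (g : FreeGroup (Fin r)) : RedW g.toWord := by
  intro L₂ x b L₃ h
  have := FreeGroup.reduce_toWord g
  rw [h] at this
  exact FreeGroup.reduce.not this

/-- The key non-vanishing: the coefficient of the Magnus expansion of a reduced word
at the monomial given by its letters is non-zero. -/
lemma PE_letters_ne_zero : ∀ (n : ℕ) (L : List (Fin r × Bool)), L.length ≤ n → RedW L →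
    PE L (L.map Prod.fst) ≠ 0 := by
  intro n
  induction n with
  | zero =>
    intro L hlen _
    have : L = [] := List.length_eq_zero_iff.mp (by omega)
    subst this
    simp [PE]
  | succ n ih =>
    intro L hlen hred
    rcases hL : L with _ | ⟨⟨i, e⟩, Lt⟩
    · simp [PE]
    subst hL
    set p : Fin r × Bool → Bool := fun x => decide (x = (i, e)) with hp
    set T : List (Fin r × Bool) := (i, e) :: Lt with hT
    set k := (T.takeWhile p).length with hk
    set L₂ := T.dropWhile p with hL₂
    have hsplit : T.takeWhile p ++ L₂ = T := List.takeWhile_append_dropWhile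
    have htw : T.takeWhile p = List.replicate k (i, e) := by
      rw [List.eq_replicate_iff]
      refine ⟨rfl, fun b hb => ?_⟩
      have hpb := List.mem_takeWhile_imp hb
      simpa [hp] using hpb
    have hk1 : 1 ≤ k := by
      rw [hk, hT, List.takeWhile_cons_of_pos (by simp [hp])]
      simp
    have hrep : List.replicate k (i, e) ++ L₂ = T := by rw [← htw]; exact hsplit
    have hlenL₂ : L₂.length ≤ n := by
      have := congrArg List.length hrep
      simp only [List.length_append, List.length_replicate] at this
      have h2 : T.length ≤ n + 1 := hlen
      omega
    have hredL₂ : RedW L₂ := by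
      intro A x b B h
      exact hred (List.replicate k (i, e) ++ A) x b B (by rw [← hrep, h, List.append_assoc])
    have hL₂head : ∀ y ∈ L₂.head?, y.1 ≠ i := by
      intro y hy
      rcases hL₂e : L₂ with _ | ⟨y₀, L₂'⟩
      · rw [hL₂e] at hy; simp at hy
      · rw [hL₂e] at hy
        simp only [List.head?_cons, Option.mem_def, Option.some.injEq] at hy
        subst hy
        have hne : ¬ p y₀ := by
          apply dropWhile_head_not p T y₀ L₂'
          rw [← hL₂, hL₂e]
        intro hfst
        have hy0 : y₀ = (i, !e) := by
          have : y₀ ≠ (i, e) := fun h => hne (by simp [hp, h])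
          rcases y₀ with ⟨y1, b1⟩
          simp only at hfst
          subst hfst
          have : b1 ≠ e := fun h => this (by rw [h])
          cases b1 <;> cases e <;> simp_all
        apply hred (List.replicate (k-1) (i, e)) i e (L₂')
        rw [← hrep, hL₂e, hy0]
        have : List.replicate k (i,e) = List.replicate (k-1) (i,e) ++ [(i,e)] := by
          conv_lhs => rw [show k = (k-1)+1 from by omega, List.replicate_succ']
        rw [this, List.append_assoc]
        rfl
    -- the product structure
    have hPE : PE T = conv (mprod (List.replicate k (if e then xe i else ye i))) (PE L₂) := by
      rw [PE, ← hrep, List.map_append, mprod_append, List.map_replicate]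
      rfl
    have hword : T.map Prod.fst = List.replicate k i ++ L₂.map Prod.fst := by
      rw [← hrep, List.map_append, List.map_replicate]
    set Z : P r := if e then xe i else ye i with hZ
    have hZsupp : PowSupp i Z := by
      cases e
      · simpa [hZ] using powSupp_ye i
      · simpa [hZ] using powSupp_xe i
    set A : P r := mprod (List.replicate k Z) with hA
    have hAsupp : PowSupp i A := powSupp_mprod_replicate hZsupp k
    have hhead : ∀ c, (L₂.map Prod.fst).head? = some c → c ≠ i := by
      intro c hc
      rcases hL₂e : L₂ with _ | ⟨y₀, L₂'⟩
      · rw [hL₂e] at hc; simp at hc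
      · rw [hL₂e] at hc
        simp only [List.map_cons, List.head?_cons, Option.some.injEq] at hc
        subst hc
        exact hL₂head y₀ (by rw [hL₂e]; simp)
    have heval : PE T (T.map Prod.fst)
        = ∑ m ∈ Finset.range (k+1), A (List.replicate m i) *
            PE L₂ (List.replicate (k-m) i ++ L₂.map Prod.fst) := by
      rw [hPE, hword]
      exact conv_powSupp_apply hAsupp k _ hhead
    have hvanish : ∀ m ∈ Finset.range (k+1), m ≠ k →
        A (List.replicate m i) * PE L₂ (List.replicate (k-m) i ++ L₂.map Prod.fst) = 0 := by
      intro m hm hne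
      simp only [Finset.mem_range] at hm
      have hkm : 1 ≤ k - m := by omega
      have : PE L₂ (List.replicate (k-m) i ++ L₂.map Prod.fst) = 0 := by
        by_contra h
        have hlang := PE_supp L₂ _ h
        rcases hL₂e : L₂ with _ | ⟨y₀, L₂'⟩
        · rw [hL₂e] at hlang
          have := inLang_nil (by simpa using hlang)
          have hlen2 := congrArg List.length this
          simp at hlen2
          omega
        · rw [hL₂e] at hlang
          simp only [List.map_cons] at hlang
          have := keyV (y₀.1 :: L₂'.map Prod.fst) (List.replicate (k-m) i) y₀.1
            (L₂'.map Prod.fst) rfl hlang i (by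
              rw [List.mem_replicate]; exact ⟨by omega, rfl⟩)
          exact hhead y₀.1 (by rw [hL₂e]; simp) this.symm
      rw [this, mul_zero]
    rw [heval, Finset.sum_eq_single_of_mem k (by simp) hvanish]
    have hzero : k - k = 0 := by omega
    rw [hzero, List.replicate_zero, List.nil_append]
    apply mul_ne_zero
    · rw [hA, hZ]
      exact mprod_Z_replicate_ne_zero i e k hk1
    · exact ih L₂ hlenL₂ hredL₂

lemma mu_injective : Function.Injective (mu : FreeGroup (Fin r) →* G0 r) := by
  rw [injective_iff_map_eq_one]
  intro g hg
  by_contra hne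
  have hword : g.toWord ≠ [] := fun h => hne (FreeGroup.toWord_eq_nil_iff.mp h)
  have hval : (mu g).1 = PE g.toWord := by
    conv_lhs => rw [← FreeGroup.mk_toWord (x := g)]
    exact mu_mk_val g.toWord
  have h1 : PE g.toWord (g.toWord.map Prod.fst) ≠ 0 :=
    PE_letters_ne_zero g.toWord.length g.toWord le_rfl (redW_toWord g)
  rw [hg] at hval
  have h2 : (1 : G0 r).1 (g.toWord.map Prod.fst) = 0 := by
    apply oneP_ne_nil
    intro h
    exact hword (List.map_eq_nil_iff.mp h)
  rw [hval] at h2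
  exact h1 h2

/-! ### Degree-lexicographic encoding of words -/

def Nenc : List (Fin r) → ℕ := fun w => w.foldl (fun n i => n * (r+1) + (i.val+1)) 0

@[simp] lemma Nenc_nil : Nenc ([] : List (Fin r)) = 0 := rfl

lemma Nenc_append_singleton (w : List (Fin r)) (i : Fin r) :
    Nenc (w ++ [i]) = Nenc w * (r+1) + (i.val+1) := by
  simp [Nenc, List.foldl_append]

lemma Nenc_succ_le : ∀ w : List (Fin r), Nenc w + 1 ≤ (r+1)^w.length := by
  intro w
  induction w using List.reverseRecOn with
  | nil => simp
  | append_singleton w i ih =>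
    have h2 : (Nenc w + 1) * (r+1) ≤ (r+1)^w.length * (r+1) := Nat.mul_le_mul_right _ ih
    have h3 : i.val + 1 ≤ r := i.isLt
    calc Nenc (w ++ [i]) + 1 = Nenc w * (r+1) + (i.val + 1) + 1 := by
            rw [Nenc_append_singleton]
      _ ≤ Nenc w * (r+1) + r + 1 := by omega
      _ = (Nenc w + 1) * (r + 1) := by ring
      _ ≤ (r+1)^w.length * (r+1) := h2
      _ = (r+1)^(w.length + 1) := by rw [pow_succ]
      _ = (r+1)^((w ++ [i]).length) := by simp

lemma Nenc_ge : ∀ w : List (Fin r), w ≠ [] → (r+1)^(w.length - 1) ≤ Nenc w := by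
  intro w
  induction w using List.reverseRecOn with
  | nil => intro h; exact absurd rfl h
  | append_singleton w i ih =>
    intro _
    rcases eq_or_ne w [] with rfl | hne
    · rw [Nenc_append_singleton]
      simp [Nenc]
    · have h1 : (r+1)^(w.length - 1) * (r+1) ≤ Nenc w * (r+1) :=
        Nat.mul_le_mul_right _ (ih hne)
      have hl : w.length ≠ 0 := fun h => hne (List.length_eq_zero_iff.mp h)
      calc (r+1)^((w ++ [i]).length - 1) = (r+1)^w.length := by simp
        _ = (r+1)^((w.length - 1) + 1) := by congr 1; omega
        _ = (r+1)^(w.length - 1) * (r+1) := by rw [pow_succ]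
        _ ≤ Nenc w * (r+1) := h1
        _ ≤ Nenc (w ++ [i]) := by rw [Nenc_append_singleton]; omega

lemma Nenc_lt_of_length_lt {v w : List (Fin r)} (h : v.length < w.length) :
    Nenc v < Nenc w := by
  have h1 := Nenc_succ_le v
  have h2 := Nenc_ge w (fun hw => by subst hw; simp at h)
  have h3 : (r+1)^v.length ≤ (r+1)^(w.length - 1) :=
    Nat.pow_le_pow_right (by omega) (by omega)
  omega

lemma length_le_of_Nenc_le {v w : List (Fin r)} (h : Nenc v ≤ Nenc w) :
    v.length ≤ w.length := by
  by_contra hlt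
  push_neg at hlt
  exact absurd h (not_le.mpr (Nenc_lt_of_length_lt hlt))

lemma nat_digit_unique {m a b c d : ℕ} (hc : c < m) (hd : d < m)
    (h : a * m + c = b * m + d) : a = b ∧ c = d := by
  rcases lt_trichotomy a b with hab | hab | hab
  · exfalso
    have h1 : a * m + m ≤ b * m := by
      calc a * m + m = (a+1) * m := by ring
        _ ≤ b * m := Nat.mul_le_mul_right m hab
    have h2 : b * m ≤ b * m + d := Nat.le_add_right _ _
    have h3 : a * m + m ≤ a * m + c := by omega
    have := Nat.le_of_add_le_add_left h3
    omega
  · subst hab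
    exact ⟨rfl, by omega⟩
  · exfalso
    have h1 : b * m + m ≤ a * m := by
      calc b * m + m = (b+1) * m := by ring
        _ ≤ a * m := Nat.mul_le_mul_right m hab
    have h3 : b * m + m ≤ b * m + d := by omega
    have := Nat.le_of_add_le_add_left h3
    omega

lemma Nenc_injective : Function.Injective (Nenc : List (Fin r) → ℕ) := by
  intro v
  induction v using List.reverseRecOn with
  | nil =>
    intro w h
    induction w using List.reverseRecOn with
    | nil => rfl
    | append_singleton w j _ =>
      rw [Nenc_append_singleton] at h
      simp only [Nenc_nil] at h
      omega
  | append_singleton v i ih =>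
    intro w h
    induction w using List.reverseRecOn with
    | nil =>
      rw [Nenc_append_singleton] at h
      simp only [Nenc_nil] at h
      omega
    | append_singleton w j _ =>
      rw [Nenc_append_singleton, Nenc_append_singleton] at h
      obtain ⟨h1, h2⟩ := nat_digit_unique (by omega) (by omega) h
      have hij : i = j := Fin.ext (by omega)
      rw [ih h1, hij]

/-! ### The Magnus ordering -/

def ltP (f g : P r) : Prop :=
  ∃ w, (∀ v, Nenc v < Nenc w → f v = g v) ∧ f w < g w

lemma ltP_irrefl (f : P r) : ¬ ltP f f := by
  rintro ⟨w, _, hw⟩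
  exact lt_irrefl _ hw

lemma ltP_trans {f g k : P r} : ltP f g → ltP g k → ltP f k := by
  rintro ⟨w₁, hb₁, hw₁⟩ ⟨w₂, hb₂, hw₂⟩
  rcases lt_trichotomy (Nenc w₁) (Nenc w₂) with hlt | heq | hgt
  · refine ⟨w₁, fun v hv => (hb₁ v hv).trans (hb₂ v (hv.trans hlt)), ?_⟩
    have h2 : g w₁ = k w₁ := hb₂ w₁ hlt
    rw [← h2]
    exact hw₁
  · have : w₁ = w₂ := Nenc_injective heq
    subst this
    exact ⟨w₁, fun v hv => (hb₁ v hv).trans (hb₂ v hv), hw₁.trans hw₂⟩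
  · refine ⟨w₂, fun v hv => (hb₁ v (hv.trans hgt)).trans (hb₂ v hv), ?_⟩
    have h2 : f w₂ = g w₂ := hb₁ w₂ hgt
    rw [h2]
    exact hw₂

lemma ltP_total {f g : P r} (h : f ≠ g) : ltP f g ∨ ltP g f := by
  classical
  have hex : ∃ n, ∃ v, Nenc v = n ∧ f v ≠ g v := by
    obtain ⟨v, hv⟩ := Function.ne_iff.mp h
    exact ⟨Nenc v, v, rfl, hv⟩
  obtain ⟨v₀, hv₀, hvne⟩ := Nat.find_spec hex
  have hmin : ∀ v, Nenc v < Nat.find hex → f v = g v := by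
    intro v hv
    by_contra hne
    exact Nat.find_min hex (by rw [← hv₀] at hv ⊢; omega) ⟨v, rfl, hne⟩
  rw [← hv₀] at hmin
  rcases lt_or_gt_of_ne hvne with hlt | hgt
  · exact Or.inl ⟨v₀, hmin, hlt⟩
  · exact Or.inr ⟨v₀, fun v hv => (hmin v hv).symm, hgt⟩

lemma ltP_conv_left {f g : P r} (h : P r) (hh : h [] = 1) (hlt : ltP f g) :
    ltP (conv h f) (conv h g) := by
  obtain ⟨w, hb, hw⟩ := hlt
  have key : ∀ v, Nenc v ≤ Nenc w →
      ∀ m, 1 ≤ m → m ≤ v.length → f (v.drop m) = g (v.drop m) := by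
    intro v hv m h1 h2
    apply hb
    have hlen : (v.drop m).length < w.length := by
      have := length_le_of_Nenc_le hv
      rw [List.length_drop]
      omega
    exact Nenc_lt_of_length_lt hlen
  refine ⟨w, ?_, ?_⟩
  · intro v hv
    rw [conv, conv]
    apply Finset.sum_congr rfl
    intro m hm
    simp only [Finset.mem_range] at hm
    rcases Nat.eq_zero_or_pos m with rfl | hpos
    · simp only [List.drop_zero]
      rw [hb v hv]
    · rw [key v (le_of_lt hv) m hpos (by omega)]
  · rw [conv, conv, Finset.sum_range_succ', Finset.sum_range_succ']
    simp only [List.take_zero, List.drop_zero, hh, one_mul]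
    have heq : ∀ m ∈ Finset.range w.length,
        h (w.take (m+1)) * f (w.drop (m+1)) = h (w.take (m+1)) * g (w.drop (m+1)) := by
      intro m hm
      simp only [Finset.mem_range] at hm
      rw [key w le_rfl (m+1) (by omega) (by omega)]
    rw [Finset.sum_congr rfl heq]
    exact add_lt_add_right hw _

lemma ltP_conv_right {f g : P r} (h : P r) (hh : h [] = 1) (hlt : ltP f g) :
    ltP (conv f h) (conv g h) := by
  obtain ⟨w, hb, hw⟩ := hlt
  have key : ∀ v, Nenc v ≤ Nenc w →
      ∀ m, m < v.length → f (v.take m) = g (v.take m) := by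
    intro v hv m h2
    apply hb
    have hlen : (v.take m).length < w.length := by
      have := length_le_of_Nenc_le hv
      rw [List.length_take]
      omega
    exact Nenc_lt_of_length_lt hlen
  refine ⟨w, ?_, ?_⟩
  · intro v hv
    rw [conv, conv]
    apply Finset.sum_congr rfl
    intro m hm
    simp only [Finset.mem_range] at hm
    rcases eq_or_lt_of_le (by omega : m ≤ v.length) with heq | hlt'
    · subst heq
      simp only [List.take_length]
      rw [hb v hv]
    · rw [key v (le_of_lt hv) m hlt']
  · rw [conv, conv, Finset.sum_range_succ, Finset.sum_range_succ]
    simp only [List.take_length, List.drop_length, hh, mul_one]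
    have heq : ∀ m ∈ Finset.range w.length,
        f (w.take m) * h (w.drop m) = g (w.take m) * h (w.drop m) := by
      intro m hm
      simp only [Finset.mem_range] at hm
      rw [key w le_rfl m hm]
    rw [Finset.sum_congr rfl heq]
    exact add_lt_add_right hw _

/-- The Magnus bi-ordering on `G0`. -/
def ltG (a b : G0 r) : Prop := ltP a.1 b.1

lemma ltG_mul_left {a b : G0 r} (c : G0 r) (h : ltG a b) : ltG (c * a) (c * b) :=
  ltP_conv_left c.1 c.2 h

lemma ltG_mul_right {a b : G0 r} (c : G0 r) (h : ltG a b) : ltG (a * c) (b * c) :=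
  ltP_conv_right c.1 c.2 h

lemma ltG_trans {a b c : G0 r} : ltG a b → ltG b c → ltG a c := ltP_trans

lemma ltG_irrefl (a : G0 r) : ¬ ltG a a := ltP_irrefl a.1

lemma ltG_total {a b : G0 r} (h : a ≠ b) : ltG a b ∨ ltG b a :=
  ltP_total (fun he => h (Subtype.ext he))

lemma ltG_iff_one {a b : G0 r} : ltG a b ↔ ltG 1 (a⁻¹ * b) := by
  constructor
  · intro h
    have := ltG_mul_left a⁻¹ h
    rwa [inv_mul_cancel] at this
  · intro h
    have := ltG_mul_left a h
    rwa [mul_one, ← mul_assoc, mul_inv_cancel, one_mul] at this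

/-! ### Substitution machinery -/

lemma degGe_conv {a b : ℕ} {f g : P r} (hf : DegGe a f) (hg : DegGe b g) :
    DegGe (a + b) (conv f g) := by
  intro w hw
  rw [conv]
  apply Finset.sum_eq_zero
  intro m hm
  simp only [Finset.mem_range] at hm
  by_cases h : m < a
  · rw [hf (w.take m) (by rw [List.length_take]; omega), zero_mul]
  · rw [hg (w.drop m) (by rw [List.length_drop]; omega), mul_zero]

/-- Words of length exactly `n` as a finite set. -/
def W (r : ℕ) : ℕ → Finset (List (Fin r))
  | 0 => {[]}
  | (n+1) => Finset.univ.biUnion (fun i : Fin r => ((W r n).image (List.cons i)))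

lemma mem_W : ∀ (n : ℕ) (l : List (Fin r)), l ∈ W r n ↔ l.length = n := by
  intro n
  induction n with
  | zero =>
    intro l
    simp [W, List.length_eq_zero_iff]
  | succ n ih =>
    intro l
    rw [W]
    simp only [Finset.mem_biUnion, Finset.mem_univ, Finset.mem_image, true_and]
    constructor
    · rintro ⟨a, t, ht, rfl⟩
      simp [ (ih t).mp ht ]
    · intro hl
      rcases l with _ | ⟨a, t⟩
      · simp at hl
      · exact ⟨a, t, (ih t).mpr (by simpa using hl), rfl⟩

def EE (F : Fin r → P r) : List (Fin r) → P r
  | [] => oneP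
  | i :: v => conv (F i) (EE F v)

lemma degGe_EE {F : Fin r → P r} (hF1 : ∀ i, DegGe 1 (F i)) :
    ∀ v : List (Fin r), DegGe v.length (EE F v) := by
  intro v
  induction v with
  | nil =>
    intro w hw
    simp at hw
  | cons i v ih =>
    have := degGe_conv (hF1 i) ih
    rw [EE]
    intro w hw
    exact this w (by simpa [Nat.add_comm] using hw)

lemma EE_eval {F : Fin r → P r} (hF1 : ∀ i, DegGe 1 (F i))
    (hFd : ∀ i j, F i [j] = if j = i then 1 else 0) :
    ∀ (v w' : List (Fin r)), w'.length ≤ v.length →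
      EE F v w' = if w' = v then 1 else 0 := by
  intro v
  induction v with
  | nil =>
    intro w' hw'
    have : w' = [] := List.length_eq_zero_iff.mp (by simpa using hw')
    subst this
    simp [EE]
  | cons i v ih =>
    intro w' hw'
    rw [EE, conv]
    rw [Finset.sum_eq_single 1]
    · rcases w' with _ | ⟨c, t⟩
      · simp only [List.take_nil, List.drop_nil]
        rw [hF1 i [] (by simp), zero_mul]
        rw [if_neg (by simp)]
      · have h1 : List.take 1 (c :: t) = [c] := rfl
        have h2 : List.drop 1 (c :: t) = t := rfl
        rw [h1, h2, hFd i c, ih t (by simpa using hw')]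
        by_cases hc : c = i
        · subst hc
          by_cases htv : t = v
          · subst htv; simp
          · rw [if_pos rfl, if_neg htv, if_neg (by simp [htv])]
            ring
        · have hnecons : c :: t ≠ i :: v := by
            intro h
            injection h with ha _
            exact hc ha
          rw [if_neg hc, zero_mul, if_neg hnecons]
    · intro m hm hne
      rcases Nat.eq_zero_or_pos m with rfl | hpos
      · rw [List.take_zero, hF1 i [] (by simp), zero_mul]
      · have h2 : 2 ≤ m := by omega
        simp only [Finset.mem_range] at hm
        rw [degGe_EE hF1 v (w'.drop m)
          (by rw [List.length_drop]; simp only [List.length_cons] at hw'; omega), mul_zero]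
    · intro h
      simp only [Finset.mem_range] at h
      have : w'.length = 0 := by omega
      have hw0 : w' = [] := List.length_eq_zero_iff.mp this
      subst hw0
      simp only [List.take_nil, List.drop_nil]
      rw [hF1 i [] (by simp), zero_mul]

/-- Substitution of `1 + F i` for each variable `1 + X i`. -/
def sigmaF (F : Fin r → P r) (f : P r) : P r := fun w' =>
  ∑ j ∈ Finset.range (w'.length + 1), ∑ v ∈ W r j, f v * EE F v w'

lemma sigmaF_add (F : Fin r → P r) (f g : P r) :
    sigmaF F (f + g) = sigmaF F f + sigmaF F g := by
  funext w'
  simp [sigmaF, add_mul, Finset.sum_add_distrib]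

lemma sigmaF_oneP (F : Fin r → P r) : sigmaF F oneP = oneP := by
  funext w'
  rw [sigmaF, Finset.sum_eq_single 0]
  · rw [show W r 0 = {[]} from rfl]
    simp [EE]
  · intro j hj hne
    apply Finset.sum_eq_zero
    intro v hv
    have : v ≠ [] := by
      intro h
      subst h
      rw [mem_W] at hv
      simp at hv
      omega
    rw [oneP_ne_nil this, zero_mul]
  · intro h
    simp at h

lemma sigmaF_Xi {F : Fin r → P r} (hF1 : ∀ i, DegGe 1 (F i)) (i : Fin r) (f : P r) :
    sigmaF F (conv (Xi i) f) = conv (F i) (sigmaF F f) := by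
  funext w'
  set n := w'.length with hn
  have hzero : ∀ (m j : ℕ) (t : List (Fin r)), t ∈ W r j → (m = 0 ∨ n - m < j) →
      F i (w'.take m) * (f t * EE F t (w'.drop m)) = 0 := by
    intro m j t ht hc
    rcases hc with rfl | hc
    · rw [List.take_zero, hF1 i [] (by simp), zero_mul]
    · have hlen : t.length = j := (mem_W j t).mp ht
      rw [degGe_EE hF1 t (w'.drop m) (by rw [List.length_drop, hlen, ← hn]; omega)]
      rw [mul_zero, mul_zero]
  have key1 : ∀ j, ∑ v ∈ W r (j+1), conv (Xi i) f v * EE F v w'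
      = ∑ t ∈ W r j, f t * EE F (i :: t) w' := by
    intro j
    rw [show W r (j+1) = Finset.univ.biUnion (fun a : Fin r => ((W r j).image (List.cons a)))
      from rfl]
    rw [Finset.sum_biUnion]
    · rw [Finset.sum_eq_single i]
      · rw [Finset.sum_image (by intro x _ y _ h; simpa using h)]
        apply Finset.sum_congr rfl
        intro t _
        rw [Xi_conv_cons, if_pos rfl]
      · intro a _ hne
        rw [Finset.sum_image (by intro x _ y _ h; simpa using h)]
        apply Finset.sum_eq_zero
        intro t _
        rw [Xi_conv_cons, if_neg hne, zero_mul]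
      · intro h
        exact absurd (Finset.mem_univ i) h
    · intro a _ b _ hab
      refine Finset.disjoint_left.mpr ?_
      intro l hl1 hl2
      simp only [Finset.mem_image] at hl1 hl2
      obtain ⟨t1, _, rfl⟩ := hl1
      obtain ⟨t2, _, h2⟩ := hl2
      injection h2 with h3 _
      exact hab h3.symm
  set A : ℕ → ℤ := fun j => ∑ m ∈ Finset.range (n+1), ∑ t ∈ W r j,
    F i (w'.take m) * (f t * EE F t (w'.drop m)) with hA
  have stepa : ∀ j, ∑ t ∈ W r j, f t * EE F (i :: t) w' = A j := by
    intro j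
    simp only [hA]
    rw [Finset.sum_comm]
    apply Finset.sum_congr rfl
    intro t _
    have hEE : EE F (i :: t) w' = ∑ m ∈ Finset.range (n+1),
        F i (w'.take m) * EE F t (w'.drop m) := by
      rw [show EE F (i :: t) = conv (F i) (EE F t) from rfl, conv, ← hn]
    rw [hEE, Finset.mul_sum]
    apply Finset.sum_congr rfl
    intro m _
    ring
  have stepb : A n = 0 := by
    rw [hA]
    apply Finset.sum_eq_zero
    intro m hm
    apply Finset.sum_eq_zero
    intro t ht
    apply hzero m n t ht
    simp only [Finset.mem_range] at hm
    omega
  have hL : sigmaF F (conv (Xi i) f) w' = ∑ j ∈ Finset.range (n+1), A j := by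
    rw [sigmaF, ← hn, Finset.sum_range_succ']
    have h0 : ∑ v ∈ W r 0, conv (Xi i) f v * EE F v w' = 0 := by
      rw [show W r 0 = {([] : List (Fin r))} from rfl]
      rw [Finset.sum_singleton, Xi_conv_nil, zero_mul]
    rw [h0, add_zero, Finset.sum_range_succ, stepb, add_zero]
    apply Finset.sum_congr rfl
    intro j hj
    rw [key1 j, stepa j]
  have hR : conv (F i) (sigmaF F f) w' = ∑ m ∈ Finset.range (n+1),
      ∑ j ∈ Finset.range (n+1), ∑ t ∈ W r j,
        F i (w'.take m) * (f t * EE F t (w'.drop m)) := by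
    rw [conv, ← hn]
    apply Finset.sum_congr rfl
    intro m hm
    simp only [Finset.mem_range] at hm
    have hsig : sigmaF F f (w'.drop m) = ∑ j ∈ Finset.range (n+1),
        ∑ t ∈ W r j, f t * EE F t (w'.drop m) := by
      rw [sigmaF]
      have hlen : (w'.drop m).length = n - m := by rw [List.length_drop, ← hn]
      rw [hlen]
      apply Finset.sum_subset (Finset.range_subset_range.mpr (by omega))
      intro j hj hnot
      simp only [Finset.mem_range] at hj hnot
      apply Finset.sum_eq_zero
      intro t ht
      have hlent : t.length = j := (mem_W j t).mp ht
      rw [degGe_EE hF1 t (w'.drop m) (by rw [List.length_drop, hlent, ← hn]; omega), mul_zero]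
    rw [hsig, Finset.mul_sum]
    apply Finset.sum_congr rfl
    intro j _
    rw [Finset.mul_sum]
  rw [hL, hR, Finset.sum_comm]

lemma sigmaF_xe {F : Fin r → P r} (hF1 : ∀ i, DegGe 1 (F i)) (i : Fin r) (f : P r) :
    sigmaF F (conv (xe i) f) = conv (oneP + F i) (sigmaF F f) := by
  rw [conv_xe, sigmaF_add, add_conv, one_conv, sigmaF_Xi hF1]

lemma sigmaF_leading {F : Fin r → P r} (hF1 : ∀ i, DegGe 1 (F i))
    (hFd : ∀ i j, F i [j] = if j = i then 1 else 0)
    (h : P r) (k : ℕ) (hd : DegGe k h) :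
    ∀ w' : List (Fin r), w'.length ≤ k → sigmaF F h w' = h w' := by
  intro w' hw'
  rw [sigmaF, Finset.sum_eq_single w'.length]
  · rw [Finset.sum_eq_single_of_mem w' ((mem_W _ _).mpr rfl)]
    · rw [EE_eval hF1 hFd w' w' le_rfl, if_pos rfl, mul_one]
    · intro v hv hne
      have hlen : v.length = w'.length := (mem_W _ _).mp hv
      rw [EE_eval hF1 hFd v w' (by omega), if_neg (fun hh => hne hh.symm), mul_zero]
  · intro j hj hne
    simp only [Finset.mem_range] at hj
    apply Finset.sum_eq_zero
    intro v hv
    have hlen : v.length = j := (mem_W _ _).mp hv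
    rw [hd v (by omega), zero_mul]
  · intro habs
    simp at habs

/-! ### The exponent-sum (degree 1) coefficients -/

lemma conv_single (f g : P r) (j : Fin r) :
    conv f g [j] = f [] * g [j] + f [j] * g [] := by
  rw [conv]
  show ∑ m ∈ Finset.range 2, f (List.take m [j]) * g (List.drop m [j]) = _
  rw [Finset.sum_range_succ, Finset.sum_range_one]
  rfl

/-- The degree-one coefficients as a homomorphism. -/
def muCoef (j : Fin r) : FreeGroup (Fin r) →* Multiplicative ℤ :=
  MonoidHom.mk' (fun g => Multiplicative.ofAdd ((mu g).1 [j])) (by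
    intro a b
    have h1 : (mu (a * b)).1 [j] = (mu a).1 [j] + (mu b).1 [j] := by
      rw [map_mul, mul_val, conv_single, (mu a).2, (mu b).2]
      ring
    simp only [h1]
    rfl)

lemma muCoef_invariant {α : FreeGroup (Fin r) →* FreeGroup (Fin r)}
    (hα : ∀ x, Abelianization.of (α x) = Abelianization.of x) (g : FreeGroup (Fin r))
    (j : Fin r) : (mu (α g)).1 [j] = (mu g).1 [j] := by
  have h1 : ∀ x : FreeGroup (Fin r),
      muCoef j x = Abelianization.lift (muCoef j) (Abelianization.of x) := by
    intro x
    rw [Abelianization.lift_apply_of]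
  have h2 : muCoef j (α g) = muCoef j g := by
    rw [h1, h1, hα]
  have h3 := congrArg Multiplicative.toAdd h2
  simpa [muCoef] using h3

lemma xe_single (i j : Fin r) : xe i [j] = if j = i then 1 else 0 := by
  rw [xe]
  by_cases h : j = i
  · subst h; simp
  · have h2 : ([j] : List (Fin r)) ≠ [i] := by simpa using h
    simp [h, h2]

/-! ### The substitution family attached to an IA endomorphism -/

def FA (α : FreeGroup (Fin r) →* FreeGroup (Fin r)) : Fin r → P r :=
  fun i w => (mu (α (FreeGroup.of i))).1 w - oneP w

lemma FA_degGe (α : FreeGroup (Fin r) →* FreeGroup (Fin r)) (i : Fin r) :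
    DegGe 1 (FA α i) := by
  intro w hw
  have : w = [] := List.length_eq_zero_iff.mp (by omega)
  subst this
  rw [FA]
  rw [(mu (α (FreeGroup.of i))).2, oneP_nil]
  ring

lemma FA_single {α : FreeGroup (Fin r) →* FreeGroup (Fin r)}
    (hα : ∀ x, Abelianization.of (α x) = Abelianization.of x) (i j : Fin r) :
    FA α i [j] = if j = i then 1 else 0 := by
  rw [FA, muCoef_invariant hα]
  have h1 : mu (FreeGroup.of i) = XG i := FreeGroup.lift_apply_of
  rw [h1]
  have h2 : (XG i).1 [j] = xe i [j] := rfl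
  rw [h2, xe_single, oneP_ne_nil (by simp)]
  ring

lemma mu_alpha_mk (α : FreeGroup (Fin r) →* FreeGroup (Fin r)) :
    ∀ L : List (Fin r × Bool),
      (mu (α (FreeGroup.mk L))).1 = sigmaF (FA α) ((mu (FreeGroup.mk L)).1) := by
  intro L
  induction L with
  | nil =>
    have h1 : FreeGroup.mk ([] : List (Fin r × Bool)) = 1 := rfl
    rw [h1, map_one, map_one, one_val, sigmaF_oneP]
  | cons x L ih =>
    rcases x with ⟨i, b⟩
    have hsplit : FreeGroup.mk ((i,b) :: L) = FreeGroup.mk [(i,b)] * FreeGroup.mk L := by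
      rw [FreeGroup.mul_mk]
      rfl
    have hQ : oneP + FA α i = (mu (α (FreeGroup.of i))).1 := by
      funext w
      rw [Pi.add_apply, FA]
      ring
    cases b
    · -- b = false : inverse generator
      have hof : FreeGroup.mk [(i, false)] = (FreeGroup.of i)⁻¹ := by
        rw [show FreeGroup.of i = FreeGroup.mk [(i,true)] from rfl, FreeGroup.inv_mk]
        simp [FreeGroup.invRev]
      set f := (mu (FreeGroup.mk L)).1 with hf
      have key : sigmaF (FA α) (conv (ye i) f)
          = conv ((mu (α (FreeGroup.of i)))⁻¹).1 (sigmaF (FA α) f) := by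
        have h1 := sigmaF_xe (FA_degGe α) i (conv (ye i) f)
        rw [← conv_assoc, xe_ye, one_conv, hQ] at h1
        have h2 := congrArg (conv ((mu (α (FreeGroup.of i)))⁻¹).1) h1
        rw [← conv_assoc] at h2
        have h3 : conv ((mu (α (FreeGroup.of i)))⁻¹).1 (mu (α (FreeGroup.of i))).1 = oneP := by
          have h4 := inv_mul_cancel (mu (α (FreeGroup.of i)))
          have h5 := congrArg Subtype.val h4
          exact h5
        rw [h3, one_conv] at h2
        exact h2.symm
      rw [hsplit, hof, map_mul, map_mul, map_mul, map_inv, map_inv, mul_val, mul_val]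
      rw [show (mu (FreeGroup.mk L)).1 = f from rfl, ih, map_inv]
      have h6 : ((mu (FreeGroup.of i))⁻¹ : G0 r) = YG i := by
        rw [show (mu (FreeGroup.of i) : G0 r) = XG i from FreeGroup.lift_apply_of]
        exact XG_inv i
      rw [h6]
      exact key.symm
    · -- b = true
      have hof : FreeGroup.mk [(i, true)] = FreeGroup.of i := rfl
      rw [hsplit, hof, map_mul, map_mul, map_mul, mul_val, mul_val, ih]
      have h1 : (mu (α (FreeGroup.of i))).1 = oneP + FA α i := hQ.symm
      rw [h1, ← sigmaF_xe (FA_degGe α) i]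
      have h2 : mu (FreeGroup.of i) = XG i := FreeGroup.lift_apply_of
      rw [h2]
      rfl

lemma mu_alpha_val (α : FreeGroup (Fin r) →* FreeGroup (Fin r)) (g : FreeGroup (Fin r)) :
    (mu (α g)).1 = sigmaF (FA α) ((mu g).1) := by
  conv_lhs => rw [← FreeGroup.mk_toWord (x := g)]
  conv_rhs => rw [← FreeGroup.mk_toWord (x := g)]
  exact mu_alpha_mk α g.toWord

/-! ### IA endomorphisms preserve the Magnus order -/

lemma ltG_one_mu_alpha {α : FreeGroup (Fin r) →* FreeGroup (Fin r)}
    (hα : ∀ x, Abelianization.of (α x) = Abelianization.of x) {u : FreeGroup (Fin r)}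
    (h : ltG 1 (mu u)) : ltG 1 (mu (α u)) := by
  obtain ⟨w₀, hb, hw⟩ := h
  set f := (mu u).1 with hf
  set d : P r := fun w => f w - oneP w with hd
  have hfd : f = oneP + d := by funext w; rw [hd]; simp
  have hdeg : DegGe w₀.length d := by
    intro v hv
    have h1 : Nenc v < Nenc w₀ := Nenc_lt_of_length_lt hv
    have h2 := hb v h1
    rw [hd]
    simp only
    rw [← h2]
    simp
  have hagree : ∀ w', w'.length ≤ w₀.length → (mu (α u)).1 w' = f w' := by
    intro w' hw'
    rw [mu_alpha_val α u, ← hf, hfd, sigmaF_add, sigmaF_oneP, Pi.add_apply,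
      sigmaF_leading (FA_degGe α) (FA_single hα) d w₀.length hdeg w' hw', Pi.add_apply]
  refine ⟨w₀, ?_, ?_⟩
  · intro v hv
    have hlen : v.length ≤ w₀.length := length_le_of_Nenc_le (le_of_lt hv)
    rw [hagree v hlen]
    exact hb v hv
  · rw [hagree w₀ le_rfl]
    exact hw

lemma ltG_mu_alpha {α : FreeGroup (Fin r) →* FreeGroup (Fin r)}
    (hα : ∀ x, Abelianization.of (α x) = Abelianization.of x) {g h : FreeGroup (Fin r)}
    (hlt : ltG (mu g) (mu h)) : ltG (mu (α g)) (mu (α h)) := by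
  rw [ltG_iff_one] at hlt ⊢
  have e1 : mu (α (g⁻¹ * h)) = (mu (α g))⁻¹ * mu (α h) := by
    rw [map_mul, map_inv, map_mul, map_inv]
  rw [← e1]
  apply ltG_one_mu_alpha hα
  have e2 : mu (g⁻¹ * h) = (mu g)⁻¹ * mu h := by rw [map_mul, map_inv]
  rw [e2]
  exact hlt

end MagnusDev


/-- `IsAlmostDirectProductOfFreeGroups G instG` says that the group `G` is an
iterated semidirect product `F_{r_ℓ} ⋊ (F_{r_{ℓ-1}} ⋊ (⋯ ⋊ F_{r_1}))` of
finitely generated free groups in which each structure action is by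
IA-automorphisms, i.e. the action on the abelianization `H₁` of each new free
factor is trivial. -/
inductive IsAlmostDirectProductOfFreeGroups : ∀ (G : Type), Group G → Prop where
  | free (r : ℕ) (G : Type) (instG : Group G)
      (e : Nonempty (@MulEquiv G (FreeGroup (Fin r)) (by exact instG.toMul) _)) :
      IsAlmostDirectProductOfFreeGroups G instG
  | step (r : ℕ) (Q : Type) (instQ : Group Q)
      (φ : @MonoidHom Q (MulAut (FreeGroup (Fin r)))
        (by exact instQ.toMulOneClass.toMulOne) _)
      (hQ : IsAlmostDirectProductOfFreeGroups Q instQ)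
      (hIA : ∀ (q : Q) (x : FreeGroup (Fin r)),
        Abelianization.of (φ q x) = Abelianization.of x)
      (G : Type) (instG : Group G)
      (e : Nonempty (@MulEquiv G (SemidirectProduct (FreeGroup (Fin r)) Q φ)
        (by exact instG.toMul) _)) :
      IsAlmostDirectProductOfFreeGroups G instG

namespace MagnusDev

variable {r : ℕ}

/-- The Magnus bi-ordering on the free group. -/
def ltF : FreeGroup (Fin r) → FreeGroup (Fin r) → Prop := fun g h => ltG (mu g) (mu h)

lemma ltF_irrefl (a : FreeGroup (Fin r)) : ¬ ltF a a := ltG_irrefl _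

lemma ltF_trans {a b c : FreeGroup (Fin r)} : ltF a b → ltF b c → ltF a c := ltG_trans

lemma ltF_trichotomous (a b : FreeGroup (Fin r)) : ltF a b ∨ a = b ∨ ltF b a := by
  rcases eq_or_ne a b with rfl | hne
  · exact Or.inr (Or.inl rfl)
  · rcases ltG_total (fun h => hne (mu_injective h)) with h | h
    · exact Or.inl h
    · exact Or.inr (Or.inr h)

lemma ltF_mul_left {a b : FreeGroup (Fin r)} (c : FreeGroup (Fin r)) (h : ltF a b) :
    ltF (c * a) (c * b) := by
  unfold ltF at h ⊢
  rw [map_mul, map_mul]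
  exact ltG_mul_left _ h

lemma ltF_mul_right {a b : FreeGroup (Fin r)} (c : FreeGroup (Fin r)) (h : ltF a b) :
    ltF (a * c) (b * c) := by
  unfold ltF at h ⊢
  rw [map_mul, map_mul]
  exact ltG_mul_right _ h

lemma ltF_alpha {α : FreeGroup (Fin r) →* FreeGroup (Fin r)}
    (hα : ∀ x, Abelianization.of (α x) = Abelianization.of x)
    {a b : FreeGroup (Fin r)} (h : ltF a b) : ltF (α a) (α b) :=
  ltG_mu_alpha hα h

lemma ltF_biOrdering : IsBiOrdering (ltF (r := r)) := by
  refine ⟨?_, fun a b c => ltF_mul_left c, fun a b c => ltF_mul_right c⟩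
  haveI h1 : IsTrichotomous (FreeGroup (Fin r)) ltF := ⟨fun a b h₁ h₂ => ((ltF_trichotomous a b).resolve_left h₁).resolve_right h₂⟩
  haveI h2 : IsIrrefl (FreeGroup (Fin r)) ltF := ⟨ltF_irrefl⟩
  haveI h3 : IsTrans (FreeGroup (Fin r)) ltF := ⟨fun _ _ _ => ltF_trans⟩
  exact @IsStrictTotalOrder.mk _ _ h1 (@IsStrictOrder.mk _ _ h2 h3)

/-- Transfer of bi-orderings along a multiplicative equivalence. -/
lemma isBiOrdering_pullback {G H : Type*} [Group G] [Group H] (e : G ≃* H)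
    {ltH : H → H → Prop} (h : IsBiOrdering ltH) :
    IsBiOrdering (fun a b => ltH (e a) (e b)) := by
  obtain ⟨hsto, hleft, hright⟩ := h
  haveI := hsto
  refine ⟨?_, ?_, ?_⟩
  · haveI h1 : IsTrichotomous G (fun a b => ltH (e a) (e b)) := ⟨by
      intro a b hab hba
      rcases trichotomous_of ltH (e a) (e b) with h | h | h
      · exact absurd h hab
      · exact e.injective h
      · exact absurd h hba⟩
    haveI h2 : IsIrrefl G (fun a b => ltH (e a) (e b)) := ⟨fun a => irrefl_of ltH (e a)⟩
    haveI h3 : IsTrans G (fun a b => ltH (e a) (e b)) :=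
      ⟨fun a b c hab hbc => trans_of ltH hab hbc⟩
    exact @IsStrictTotalOrder.mk _ _ h1 (@IsStrictOrder.mk _ _ h2 h3)
  · intro a b c hab
    simp only [map_mul]
    exact hleft _ _ _ hab
  · intro a b c hab
    simp only [map_mul]
    exact hright _ _ _ hab

/-- Lexicographic bi-ordering on a semidirect product with IA action. -/
lemma semidirect_biOrdering (Q : Type) [Group Q]
    (φ : Q →* MulAut (FreeGroup (Fin r)))
    (hIA : ∀ (q : Q) (x : FreeGroup (Fin r)),
      Abelianization.of (φ q x) = Abelianization.of x)
    (ltQ : Q → Q → Prop) (hQ : IsBiOrdering ltQ) :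
    IsBiOrdering (fun a b : SemidirectProduct (FreeGroup (Fin r)) Q φ =>
      ltQ a.right b.right ∨ (a.right = b.right ∧ ltF a.left b.left)) := by
  obtain ⟨hsto, hleft, hright⟩ := hQ
  haveI := hsto
  set lt : SemidirectProduct (FreeGroup (Fin r)) Q φ →
      SemidirectProduct (FreeGroup (Fin r)) Q φ → Prop :=
    fun a b => ltQ a.right b.right ∨ (a.right = b.right ∧ ltF a.left b.left) with hlt
  have htrans : ∀ a b c, lt a b → lt b c → lt a c := by
    intro a b c hab hbc
    rcases hab with h1 | ⟨h1, h1'⟩ <;> rcases hbc with h2 | ⟨h2, h2'⟩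
    · exact Or.inl (trans_of ltQ h1 h2)
    · exact Or.inl (h2 ▸ h1)
    · exact Or.inl (h1 ▸ h2)
    · exact Or.inr ⟨h1.trans h2, ltF_trans h1' h2'⟩
  have hirr : ∀ a, ¬ lt a a := by
    intro a h
    rcases h with h | ⟨_, h⟩
    · exact irrefl_of ltQ _ h
    · exact ltF_irrefl _ h
  refine ⟨?_, ?_, ?_⟩
  · haveI h1 : IsTrichotomous _ lt := ⟨by
      intro a b hab hba
      rcases trichotomous_of ltQ a.right b.right with h | h | h
      · exact absurd (Or.inl h) hab
      · rcases ltF_trichotomous a.left b.left with h' | h' | h'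
        · exact absurd (Or.inr ⟨h, h'⟩) hab
        · exact SemidirectProduct.ext h' h
        · exact absurd (Or.inr ⟨h.symm, h'⟩) hba
      · exact absurd (Or.inl h) hba⟩
    haveI h2 : IsIrrefl _ lt := ⟨hirr⟩
    haveI h3 : IsTrans _ lt := ⟨htrans⟩
    exact @IsStrictTotalOrder.mk _ _ h1 (@IsStrictOrder.mk _ _ h2 h3)
  · intro a b c hab
    rcases hab with h | ⟨h, h'⟩
    · refine Or.inl ?_
      rw [SemidirectProduct.mul_right, SemidirectProduct.mul_right]
      exact hleft _ _ _ h
    · refine Or.inr ⟨?_, ?_⟩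
      · rw [SemidirectProduct.mul_right, SemidirectProduct.mul_right, h]
      · rw [SemidirectProduct.mul_left, SemidirectProduct.mul_left]
        apply ltF_mul_left
        exact ltF_alpha (α := (φ c.right).toMonoidHom) (hIA c.right) h'
  · intro a b c hab
    rcases hab with h | ⟨h, h'⟩
    · refine Or.inl ?_
      rw [SemidirectProduct.mul_right, SemidirectProduct.mul_right]
      exact hright _ _ _ h
    · refine Or.inr ⟨?_, ?_⟩
      · rw [SemidirectProduct.mul_right, SemidirectProduct.mul_right, h]
      · rw [SemidirectProduct.mul_left, SemidirectProduct.mul_left, h]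
        apply ltF_mul_right
        exact h'

end MagnusDev


/-- An almost-direct product of free groups — an iterated semidirect product of
free groups in which each action induces the identity on the abelianization of
each free factor — is bi-orderable (via the lexicographic order built from the
Magnus orders on the free factors). -/
theorem almostDirectProductOfFreeGroups_biOrderable
    (G : Type) [instG : Group G]
    (hG : IsAlmostDirectProductOfFreeGroups G instG) :
    ∃ lt : G → G → Prop, IsBiOrdering lt := by
  induction hG with
  | free r G instG e =>
    obtain ⟨e⟩ := e
    exact ⟨fun a b => MagnusDev.ltF (e a) (e b),
      MagnusDev.isBiOrdering_pullback e MagnusDev.ltF_biOrdering⟩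
  | step r Q instQ φ hQ hIA G instG e ih =>
    obtain ⟨ltQ, hltQ⟩ := ih
    obtain ⟨e⟩ := e
    exact ⟨_, MagnusDev.isBiOrdering_pullback e
      (MagnusDev.semidirect_biOrdering Q φ hIA ltQ hltQ)⟩
end
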